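/- arXiv:1509.07040 — 2 statements merged into one kernel-verified Lean document; each statement's English description precedes it below -/
import Mathlib

section
/- Let f : 𝒳ⁿ → ℝ satisfy the bounded differences condition with constants c_i, i.e., changing the i-th coordinate changes f by at most c_i. If X = (X₁,...,Xₙ) are i.i.d. with law p, then for every ε > 0, P(f(X) − E[f(X)] > ε) ≤ exp(−2ε²/Σᵢ cᵢ²). (McDiarmid's inequality.) -/
open MeasureTheory

section Aux
open Real

lemma hoeffding_core {q : ℝ} (hq0 : 0 ≤ q) (hq1 : q ≤ 1) (h : ℝ) :
    Real.log (1 - q + q * Real.exp h) ≤ q * h + h ^ 2 / 8 := by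
  set φ : ℝ → ℝ := fun x => 1 - q + q * Real.exp x with hφdef
  have hφpos : ∀ x, 0 < φ x := by
    intro x
    rcases eq_or_lt_of_le hq0 with h0 | h0
    · simp [hφdef, ← h0]
    · have : 0 < q * Real.exp x := mul_pos h0 (exp_pos x)
      have : 0 ≤ 1 - q := by linarith
      simp only [hφdef]; nlinarith [mul_pos h0 (exp_pos x)]
  have hφd : ∀ x, HasDerivAt φ (q * Real.exp x) x := by
    intro x
    exact ((Real.hasDerivAt_exp x).const_mul q).const_add (1 - q)
  set G : ℝ → ℝ := fun x => q + x / 4 - q * Real.exp x / φ x with hGdef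
  have hGd : ∀ x, HasDerivAt G
      (1 / 4 - (q * Real.exp x * φ x - q * Real.exp x * (q * Real.exp x)) / (φ x) ^ 2) x := by
    intro x
    have h1 : HasDerivAt (fun y => q * Real.exp y) (q * Real.exp x) x :=
      (Real.hasDerivAt_exp x).const_mul q
    have h2 := h1.div (hφd x) (ne_of_gt (hφpos x))
    have h3 : HasDerivAt (fun y => q + y / 4) (1 / 4) x := by
      simpa using ((hasDerivAt_id x).div_const 4).const_add q
    exact h3.sub h2
  have hGd' : ∀ x, 0 ≤ 1 / 4 - (q * Real.exp x * φ x - q * Real.exp x * (q * Real.exp x)) / (φ x) ^ 2 := by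
    intro x
    rw [sub_nonneg, div_le_iff₀ (pow_pos (hφpos x) 2)]
    have key : q * Real.exp x * φ x - q * Real.exp x * (q * Real.exp x)
        = (q * Real.exp x) * (1 - q) := by simp only [hφdef]; ring
    rw [key]
    nlinarith [sq_nonneg (1 - q - q * Real.exp x), exp_pos x, mul_nonneg hq0 (exp_pos x).le]
  have hGmono : Monotone G := by
    apply monotone_of_deriv_nonneg
    · intro x; exact (hGd x).differentiableAt
    · intro x; rw [(hGd x).deriv]; exact hGd' x
  have hG0 : G 0 = 0 := by simp [hGdef, hφdef]
  set F : ℝ → ℝ := fun x => q * x + x ^ 2 / 8 - Real.log (φ x) with hFdef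
  have hFd : ∀ x, HasDerivAt F (G x) x := by
    intro x
    have h1 : HasDerivAt (fun y => q * y + y ^ 2 / 8) (q + x / 4) x := by
      have := ((hasDerivAt_pow 2 x).div_const 8).const_add 0
      have h2 : HasDerivAt (fun y : ℝ => q * y) q x := by
        simpa using (hasDerivAt_id x).const_mul q
      have h3 : HasDerivAt (fun y : ℝ => y ^ 2 / 8) (x / 4) x := by
        have := (hasDerivAt_pow 2 x).div_const 8
        refine this.congr_deriv ?_; push_cast; ring
      exact h2.add h3
    have h2 : HasDerivAt (fun y => Real.log (φ y)) (q * Real.exp x / φ x) x :=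
      (hφd x).log (ne_of_gt (hφpos x))
    exact h1.sub h2
  have hF0 : F 0 = 0 := by simp [hFdef, hφdef]
  have hFnonneg : ∀ x, 0 ≤ F x := by
    intro x
    rcases le_or_gt 0 x with hx | hx
    · have hmono : MonotoneOn F (Set.Ici 0) := by
        apply monotoneOn_of_deriv_nonneg (convex_Ici 0)
        · exact Continuous.continuousOn (by
            have : Differentiable ℝ F := fun y => (hFd y).differentiableAt
            exact this.continuous)
        · intro y _; exact (hFd y).differentiableAt.differentiableWithinAt
        · intro y hy
          rw [(hFd y).deriv]
          have : (0:ℝ) ≤ y := le_of_lt (by simpa using hy)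
          calc (0:ℝ) = G 0 := hG0.symm
          _ ≤ G y := hGmono this
      have := hmono (Set.self_mem_Ici) (Set.mem_Ici.2 hx) hx
      rwa [hF0] at this
    · have hmono : AntitoneOn F (Set.Iic 0) := by
        apply antitoneOn_of_deriv_nonpos (convex_Iic 0)
        · exact Continuous.continuousOn (by
            have : Differentiable ℝ F := fun y => (hFd y).differentiableAt
            exact this.continuous)
        · intro y _; exact (hFd y).differentiableAt.differentiableWithinAt
        · intro y hy
          rw [(hFd y).deriv]
          have hy0 : y ≤ (0:ℝ) := le_of_lt (by simpa using hy)
          calc G y ≤ G 0 := hGmono hy0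
          _ = 0 := hG0
      have := hmono (Set.mem_Iic.2 hx.le) (Set.self_mem_Iic) hx.le
      rwa [hF0] at this
  have := hFnonneg h
  simp only [hFdef] at this
  linarith

lemma integrable_of_bounded {Ω : Type*} [MeasurableSpace Ω] {μ : MeasureTheory.Measure Ω}
    [MeasureTheory.IsFiniteMeasure μ] {g : Ω → ℝ} (hg : Measurable g) (M : ℝ)
    (hM : ∀ ω, |g ω| ≤ M) : MeasureTheory.Integrable g μ :=
  (MeasureTheory.integrable_const M).mono' hg.aestronglyMeasurable (Filter.Eventually.of_forall hM)

lemma hoeffding_lemma {Ω : Type*} [MeasurableSpace Ω] (μ : MeasureTheory.Measure Ω)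
    [MeasureTheory.IsProbabilityMeasure μ] (Y : Ω → ℝ) (hY : Measurable Y) {a b : ℝ} (t : ℝ)
    (ha : ∀ ω, a ≤ Y ω) (hb : ∀ ω, Y ω ≤ b) (hmean : ∫ ω, Y ω ∂μ = 0) :
    ∫ ω, Real.exp (t * Y ω) ∂μ ≤ Real.exp (t ^ 2 * (b - a) ^ 2 / 8) := by
  have hM : ∀ ω, |Y ω| ≤ max |a| |b| := fun ω =>
    abs_le.2 ⟨le_trans (neg_le_neg (le_max_left |a| |b|)) (by
      have := ha ω; have := neg_abs_le a; linarith),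
      le_trans (hb ω) (le_trans (le_abs_self b) (le_max_right _ _))⟩
  have hYint : MeasureTheory.Integrable Y μ := integrable_of_bounded hY _ hM
  have hne : Nonempty Ω := by
    have h1 : μ Set.univ ≠ 0 := by simp
    exact ⟨(MeasureTheory.nonempty_of_measure_ne_zero h1).some⟩
  have hab : a ≤ b := le_trans (ha (Classical.arbitrary _)) (hb (Classical.arbitrary _))
  have ha0 : a ≤ 0 := by
    have : ∫ _ : Ω, a ∂μ ≤ ∫ ω, Y ω ∂μ :=
      MeasureTheory.integral_mono (MeasureTheory.integrable_const a) hYint ha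
    simpa [hmean] using this
  have hb0 : 0 ≤ b := by
    have : ∫ ω, Y ω ∂μ ≤ ∫ _ : Ω, b ∂μ :=
      MeasureTheory.integral_mono hYint (MeasureTheory.integrable_const b) hb
    simpa [hmean] using this
  rcases eq_or_lt_of_le hab with heq | hlt
  · -- a = b, hence a = b = 0 and Y ≡ 0
    have ha' : a = 0 := le_antisymm ha0 (heq ▸ hb0)
    have hbz : b = 0 := by rw [← heq, ha']
    have hY0 : ∀ ω, Y ω = 0 := fun ω => le_antisymm (hbz ▸ hb ω) (ha' ▸ ha ω)
    simp only [hY0, mul_zero, Real.exp_zero, MeasureTheory.integral_const, MeasureTheory.measure_univ,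
      ENNReal.toReal_one, MeasureTheory.probReal_univ, smul_eq_mul, mul_one]
    exact Real.one_le_exp (by positivity)
  · -- a < b
    set q : ℝ := -a / (b - a) with hqdef
    have hba : (0:ℝ) < b - a := sub_pos.2 hlt
    have hq0 : 0 ≤ q := div_nonneg (by linarith) hba.le
    have hq1 : q ≤ 1 := by rw [div_le_one hba]; linarith
    -- pointwise convexity bound
    have hpt : ∀ ω, Real.exp (t * Y ω) ≤
        (b - Y ω) / (b - a) * Real.exp (t * a) + (Y ω - a) / (b - a) * Real.exp (t * b) := by
      intro ω
      have hu : (0:ℝ) ≤ (b - Y ω) / (b - a) := div_nonneg (by linarith [hb ω]) hba.le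
      have hv : (0:ℝ) ≤ (Y ω - a) / (b - a) := div_nonneg (by linarith [ha ω]) hba.le
      have huv : (b - Y ω) / (b - a) + (Y ω - a) / (b - a) = 1 := by
        field_simp
        ring
      have := convexOn_exp.2 (Set.mem_univ (t * a)) (Set.mem_univ (t * b)) hu hv huv
      have harg : (b - Y ω) / (b - a) * (t * a) + (Y ω - a) / (b - a) * (t * b) = t * Y ω := by
        field_simp; ring
      simp only [smul_eq_mul] at this
      rw [harg] at this
      exact this
    have hexpint : MeasureTheory.Integrable (fun ω => Real.exp (t * Y ω)) μ := by
      apply integrable_of_bounded (by fun_prop) (Real.exp (|t| * max |a| |b|))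
      intro ω
      rw [abs_of_pos (Real.exp_pos _)]
      apply Real.exp_le_exp.2
      calc t * Y ω ≤ |t * Y ω| := le_abs_self _
      _ = |t| * |Y ω| := abs_mul t (Y ω)
      _ ≤ |t| * max |a| |b| := mul_le_mul_of_nonneg_left (hM ω) (abs_nonneg t)
    have hrhint : MeasureTheory.Integrable
        (fun ω => (b - Y ω) / (b - a) * Real.exp (t * a) + (Y ω - a) / (b - a) * Real.exp (t * b)) μ := by
      apply MeasureTheory.Integrable.add
      · exact ((((MeasureTheory.integrable_const b).sub hYint).div_const (b-a)).mul_const _)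
      · exact (((hYint.sub (MeasureTheory.integrable_const a)).div_const (b-a)).mul_const _)
    have hstep1 : ∫ ω, Real.exp (t * Y ω) ∂μ ≤
        (1 - q) * Real.exp (t * a) + q * Real.exp (t * b) := by
      have hrepr : ∀ ω, (b - Y ω) / (b - a) * Real.exp (t * a) + (Y ω - a) / (b - a) * Real.exp (t * b)
          = (b * Real.exp (t * a) - a * Real.exp (t * b)) / (b - a)
            + ((Real.exp (t * b) - Real.exp (t * a)) / (b - a)) * Y ω := by
        intro ω; field_simp; ring
      have := MeasureTheory.integral_mono hexpint hrhint hpt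
      refine le_trans this (le_of_eq ?_)
      calc ∫ ω, ((b - Y ω) / (b - a) * Real.exp (t * a) + (Y ω - a) / (b - a) * Real.exp (t * b)) ∂μ
          = ∫ ω, ((b * Real.exp (t * a) - a * Real.exp (t * b)) / (b - a)
            + ((Real.exp (t * b) - Real.exp (t * a)) / (b - a)) * Y ω) ∂μ := by
            apply MeasureTheory.integral_congr_ae
            exact Filter.Eventually.of_forall hrepr
        _ = (b * Real.exp (t * a) - a * Real.exp (t * b)) / (b - a)
            + ((Real.exp (t * b) - Real.exp (t * a)) / (b - a)) * ∫ ω, Y ω ∂μ := by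
            rw [MeasureTheory.integral_add (MeasureTheory.integrable_const _) (hYint.const_mul _),
              MeasureTheory.integral_const, MeasureTheory.integral_const_mul]
            simp
        _ = (1 - q) * Real.exp (t * a) + q * Real.exp (t * b) := by
            rw [hmean, hqdef]; field_simp; ring
    -- apply the calculus core
    set h' : ℝ := t * (b - a) with hh'def
    have hφpos : (0:ℝ) < 1 - q + q * Real.exp h' := by
      rcases eq_or_lt_of_le hq0 with h0 | h0
      · simp [← h0]
      · nlinarith [Real.exp_pos h', mul_pos h0 (Real.exp_pos h')]
    have hkey : (1 - q) * Real.exp (t * a) + q * Real.exp (t * b)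
        = Real.exp (t * a) * (1 - q + q * Real.exp h') := by
      have e1 : Real.exp (t * a) * Real.exp h' = Real.exp (t * b) := by
        rw [← Real.exp_add, hh'def]; ring_nf
      calc (1 - q) * Real.exp (t * a) + q * Real.exp (t * b)
          = (1 - q) * Real.exp (t * a) + q * (Real.exp (t * a) * Real.exp h') := by rw [e1]
        _ = Real.exp (t * a) * (1 - q + q * Real.exp h') := by ring
    have hlog := hoeffding_core hq0 hq1 h'
    have hfin : Real.exp (t * a) * (1 - q + q * Real.exp h')
        ≤ Real.exp (t ^ 2 * (b - a) ^ 2 / 8) := by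
      rw [← Real.exp_log hφpos, ← Real.exp_add]
      apply Real.exp_le_exp.2
      have hqh : t * a + q * h' = 0 := by
        rw [hqdef, hh'def]; field_simp; ring
      have hsq : h' ^ 2 = t ^ 2 * (b - a) ^ 2 := by rw [hh'def]; ring
      linarith [hlog]
    calc ∫ ω, Real.exp (t * Y ω) ∂μ ≤ (1 - q) * Real.exp (t * a) + q * Real.exp (t * b) := hstep1
    _ = Real.exp (t * a) * (1 - q + q * Real.exp h') := hkey
    _ ≤ Real.exp (t ^ 2 * (b - a) ^ 2 / 8) := hfin

open MeasureTheory

section McDiarmid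
variable {𝒳 : Type*} [MeasurableSpace 𝒳]

lemma bdd_diff_total {n : ℕ} (f : (Fin n → 𝒳) → ℝ) (c : Fin n → ℝ)
    (hbdd : ∀ (i : Fin n) (x : Fin n → 𝒳) (x' : 𝒳),
      |f x - f (Function.update x i x')| ≤ c i) (x x' : Fin n → 𝒳) :
    |f x - f x'| ≤ ∑ i, c i := by
  classical
  suffices h : ∀ s : Finset (Fin n), |f x - f (s.piecewise x' x)| ≤ ∑ i ∈ s, c i by
    simpa [Finset.piecewise_univ] using h Finset.univ
  intro s
  induction s using Finset.induction_on with
  | empty => simp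
  | @insert j s hj ih =>
    rw [Finset.piecewise_insert, Finset.sum_insert hj]
    have h1 := abs_sub_le (f x) (f (s.piecewise x' x))
      (f (Function.update (s.piecewise x' x) j (x' j)))
    have h2 := hbdd j (s.piecewise x' x) (x' j)
    linarith

lemma measurable_finCons {n : ℕ} :
    Measurable fun w : 𝒳 × (Fin n → 𝒳) => (Fin.cons w.1 w.2 : Fin (n + 1) → 𝒳) := by
  apply measurable_pi_iff.2
  intro j
  refine Fin.cases ?_ ?_ j
  · simpa using measurable_fst
  · intro i; simpa [Function.comp_def] using (measurable_pi_apply i).comp measurable_snd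

lemma mgf_bound (p : Measure 𝒳) [IsProbabilityMeasure p] :
    ∀ (n : ℕ) (f : (Fin n → 𝒳) → ℝ), Measurable f → ∀ c : Fin n → ℝ, (∀ i, 0 ≤ c i) →
    (∀ (i : Fin n) (x : Fin n → 𝒳) (x' : 𝒳),
      |f x - f (Function.update x i x')| ≤ c i) → ∀ t : ℝ,
    ∫ x, Real.exp (t * (f x - ∫ y, f y ∂(Measure.pi fun _ : Fin n => p)))
        ∂(Measure.pi fun _ : Fin n => p)
      ≤ Real.exp (t ^ 2 * (∑ i, c i ^ 2) / 8) := by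
  have hne : Nonempty 𝒳 := by
    have h1 : p Set.univ ≠ 0 := by simp
    exact ⟨(MeasureTheory.nonempty_of_measure_ne_zero h1).some⟩
  intro n
  induction n with
  | zero =>
    intro f hf c hc hbdd t
    have hconstf : ∀ x : Fin 0 → 𝒳, f x = f (fun i => i.elim0) := fun x =>
      congrArg f (Subsingleton.elim _ _)
    have hint : ∫ y, f y ∂(Measure.pi fun _ : Fin 0 => p) = f (fun i => i.elim0) := by
      rw [show (fun y => f y) = fun _ : Fin 0 → 𝒳 => f (fun i => i.elim0) from funext hconstf]
      simp
    simp only [hint]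
    calc ∫ x, Real.exp (t * (f x - f fun i => i.elim0)) ∂(Measure.pi fun _ : Fin 0 => p)
        = ∫ _x, (1:ℝ) ∂(Measure.pi fun _ : Fin 0 => p) := by
          apply integral_congr_ae
          apply Filter.Eventually.of_forall
          intro x
          simp [hconstf x]
      _ = 1 := by simp
      _ ≤ Real.exp (t ^ 2 * (∑ i, c i ^ 2) / 8) := Real.one_le_exp (by
          have : (0:ℝ) ≤ ∑ i, c i ^ 2 := Finset.sum_nonneg fun i _ => sq_nonneg _
          positivity)
  | succ n ih =>
    intro f hf c hc hbdd t
    set μn : Measure (Fin n → 𝒳) := Measure.pi fun _ => p with hμn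
    set μN : Measure (Fin (n+1) → 𝒳) := Measure.pi fun _ => p with hμN
    -- bound on f
    set x₀ : Fin (n+1) → 𝒳 := fun _ => Classical.arbitrary 𝒳 with hx₀
    set M : ℝ := |f x₀| + ∑ i, c i with hM
    have hfM : ∀ x, |f x| ≤ M := by
      intro x
      have := bdd_diff_total f c hbdd x x₀
      have h1 := abs_sub_abs_le_abs_sub (f x) (f x₀)
      rw [hM]; linarith
    -- the measurable equivalence
    set e := (MeasurableEquiv.piFinSuccAbove (fun _ : Fin (n+1) => 𝒳) 0) with he
    have hmp : MeasurePreserving e μN (p.prod μn) :=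
      measurePreserving_piFinSuccAbove (fun _ => p) 0
    have hesymm : ∀ w : 𝒳 × (Fin n → 𝒳), e.symm w = Fin.cons w.1 w.2 := by
      intro w
      show (Fin.insertNthEquiv (fun _ : Fin (n+1) => 𝒳) 0) w = _
      simp [Fin.insertNthEquiv, Fin.insertNth_zero']
    haveI hμnP : IsProbabilityMeasure μn := by rw [hμn]; infer_instance
    haveI hμNP : IsProbabilityMeasure μN := by rw [hμN]; infer_instance
    -- function on the product space
    set F : 𝒳 × (Fin n → 𝒳) → ℝ := fun w => f (Fin.cons w.1 w.2) with hF
    have hFmeas : Measurable F := hf.comp measurable_finCons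
    have hFM : ∀ w, |F w| ≤ M := fun w => hfM _
    have hFint : Integrable F (p.prod μn) := integrable_of_bounded hFmeas M hFM
    -- the conditional expectation g
    set g : (Fin n → 𝒳) → ℝ := fun x => ∫ y, f (Fin.cons y x) ∂p with hg
    have hgsm : StronglyMeasurable g := hFmeas.stronglyMeasurable.integral_prod_left'
    have hgmeas : Measurable g := hgsm.measurable
    have hconsx : ∀ x : Fin n → 𝒳, Measurable fun y => f (Fin.cons y x) :=
      fun x => hf.comp (measurable_finCons.comp (measurable_id.prodMk measurable_const))
    have hfxint : ∀ x, Integrable (fun y => f (Fin.cons y x)) p :=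
      fun x => integrable_of_bounded (hconsx x) M (fun y => hfM _)
    have hgM : ∀ x, |g x| ≤ M := by
      intro x
      calc |g x| ≤ ∫ y, |f (Fin.cons y x)| ∂p := by
            simpa [Real.norm_eq_abs] using norm_integral_le_integral_norm (fun y => f (Fin.cons y x)) (μ := p)
        _ ≤ ∫ _y, M ∂p := integral_mono (hfxint x).abs (integrable_const _) (fun y => hfM _)
        _ = M := by simp
    have hgbdd : ∀ (i : Fin n) (x : Fin n → 𝒳) (x' : 𝒳),
        |g x - g (Function.update x i x')| ≤ c i.succ := by
      intro i x x'
      have hupd : ∀ y : 𝒳, (Fin.cons y (Function.update x i x') : Fin (n+1) → 𝒳) =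
          Function.update (Fin.cons y x) i.succ x' := by
        intro y
        ext j
        refine Fin.cases ?_ ?_ j
        · simp [Function.update_of_ne (Fin.succ_ne_zero i).symm]
        · intro k
          rcases eq_or_ne k i with rfl | hk
          · simp
          · simp [Function.update_of_ne hk,
              Function.update_of_ne ((Fin.succ_injective n).ne hk)]
      have heq : g x - g (Function.update x i x')
          = ∫ y, (f (Fin.cons y x) - f (Fin.cons y (Function.update x i x'))) ∂p := by
        rw [integral_sub (hfxint x) (hfxint _)]
      rw [heq]
      calc |∫ y, (f (Fin.cons y x) - f (Fin.cons y (Function.update x i x'))) ∂p|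
          ≤ ∫ y, |f (Fin.cons y x) - f (Fin.cons y (Function.update x i x'))| ∂p := by
            simpa [Real.norm_eq_abs] using norm_integral_le_integral_norm
              (fun y => f (Fin.cons y x) - f (Fin.cons y (Function.update x i x'))) (μ := p)
        _ ≤ ∫ _y, c i.succ ∂p := integral_mono ((hfxint x).sub (hfxint _)).abs
            (integrable_const _)
            (fun y => by rw [hupd y]; exact hbdd i.succ (Fin.cons y x) x')
        _ = c i.succ := by simp
    -- transfer integrals to the product space
    have htrans : ∀ G : (Fin (n+1) → 𝒳) → ℝ,
        ∫ z, G z ∂μN = ∫ w, G (e.symm w) ∂(p.prod μn) :=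
      fun G => ((MeasurePreserving.symm e hmp).integral_comp' G).symm
    set E : ℝ := ∫ z, f z ∂μN with hE
    have hEg : E = ∫ x, g x ∂μn := by
      rw [hE, htrans f]
      simp only [hesymm]
      exact integral_prod_symm F hFint
    -- integrability of the exponential on the product
    have hexpbound : ∀ w : 𝒳 × (Fin n → 𝒳),
        |Real.exp (t * (F w - E))| ≤ Real.exp (|t| * (M + |E|)) := by
      intro w
      rw [abs_of_pos (Real.exp_pos _)]
      apply Real.exp_le_exp.2
      calc t * (F w - E) ≤ |t * (F w - E)| := le_abs_self _
        _ = |t| * |F w - E| := abs_mul _ _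
        _ ≤ |t| * (M + |E|) := mul_le_mul_of_nonneg_left
            (le_trans (abs_sub _ _) (add_le_add (hFM w) le_rfl)) (abs_nonneg t)
    have hexpint : Integrable (fun w => Real.exp (t * (F w - E))) (p.prod μn) :=
      integrable_of_bounded (((hFmeas.sub measurable_const).const_mul t).exp) _ hexpbound
    -- Hoeffding's lemma applied at each fixed x
    have hinner : ∀ x : Fin n → 𝒳,
        ∫ y, Real.exp (t * (f (Fin.cons y x) - E)) ∂p
          ≤ Real.exp (t ^ 2 * c 0 ^ 2 / 8) * Real.exp (t * (g x - E)) := by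
      intro x
      set Y : 𝒳 → ℝ := fun y => f (Fin.cons y x) - g x with hY
      have hYmeas : Measurable Y := (hconsx x).sub measurable_const
      have hYmean : ∫ y, Y y ∂p = 0 := by
        rw [hY]
        rw [integral_sub (hfxint x) (integrable_const _)]
        simp [hg]
      set S : Set ℝ := Set.range (fun y => f (Fin.cons y x)) with hS
      have hSne : S.Nonempty := ⟨f (Fin.cons (Classical.arbitrary 𝒳) x), ⟨_, rfl⟩⟩
      have hSbddA : BddAbove S := ⟨M, by rintro v ⟨y, rfl⟩; exact le_trans (le_abs_self _) (hfM _)⟩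
      have hSbddB : BddBelow S := ⟨-M, by
        rintro v ⟨y, rfl⟩
        have := hfM (Fin.cons y x); have := neg_abs_le (f (Fin.cons y x)); linarith⟩
      set a : ℝ := sInf S with ha
      set b : ℝ := sSup S with hb
      have ha' : ∀ y, a ≤ f (Fin.cons y x) := fun y => csInf_le hSbddB ⟨y, rfl⟩
      have hb' : ∀ y, f (Fin.cons y x) ≤ b := fun y => le_csSup hSbddA ⟨y, rfl⟩
      have hab : a ≤ b := le_trans (ha' (Classical.arbitrary 𝒳)) (hb' (Classical.arbitrary 𝒳))
      have hba : b - a ≤ c 0 := by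
        have hble : b ≤ a + c 0 := by
          apply csSup_le hSne
          rintro v ⟨y, rfl⟩
          have hale : f (Fin.cons y x) - c 0 ≤ a := by
            apply le_csInf hSne
            rintro w ⟨y', rfl⟩
            have h1 := hbdd 0 (Fin.cons y x) y'
            rw [Fin.update_cons_zero] at h1
            have := abs_le.1 h1
            linarith [this.2]
          linarith
        linarith
      have hhoeff := hoeffding_lemma p Y hYmeas t (a := a - g x) (b := b - g x)
        (fun y => by have := ha' y; simp [hY]; linarith)
        (fun y => by have := hb' y; simp [hY]; linarith) hYmean
      have hsq : ((b - g x) - (a - g x)) ^ 2 ≤ c 0 ^ 2 := by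
        have h1 : (b - g x) - (a - g x) = b - a := by ring
        rw [h1]
        apply pow_le_pow_left₀ (by linarith) hba
      have hexpY : ∫ y, Real.exp (t * Y y) ∂p ≤ Real.exp (t ^ 2 * c 0 ^ 2 / 8) := by
        refine le_trans hhoeff (Real.exp_le_exp.2 ?_)
        have := sq_nonneg t
        calc t ^ 2 * ((b - g x) - (a - g x)) ^ 2 / 8 ≤ t ^ 2 * c 0 ^ 2 / 8 := by nlinarith
          _ = t ^ 2 * c 0 ^ 2 / 8 := rfl
      have hsplit : ∀ y, Real.exp (t * (f (Fin.cons y x) - E))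
          = Real.exp (t * Y y) * Real.exp (t * (g x - E)) := by
        intro y
        rw [← Real.exp_add, hY]
        congr 1
        simp only
        ring
      calc ∫ y, Real.exp (t * (f (Fin.cons y x) - E)) ∂p
          = ∫ y, Real.exp (t * Y y) * Real.exp (t * (g x - E)) ∂p :=
            integral_congr_ae (Filter.Eventually.of_forall hsplit)
        _ = (∫ y, Real.exp (t * Y y) ∂p) * Real.exp (t * (g x - E)) := integral_mul_const _ _
        _ ≤ Real.exp (t ^ 2 * c 0 ^ 2 / 8) * Real.exp (t * (g x - E)) :=
            mul_le_mul_of_nonneg_right hexpY (Real.exp_pos _).le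
    -- putting it all together
    have hgexpbound : ∀ x : Fin n → 𝒳,
        |Real.exp (t * (g x - E))| ≤ Real.exp (|t| * (M + |E|)) := by
      intro x
      rw [abs_of_pos (Real.exp_pos _)]
      apply Real.exp_le_exp.2
      calc t * (g x - E) ≤ |t * (g x - E)| := le_abs_self _
        _ = |t| * |g x - E| := abs_mul _ _
        _ ≤ |t| * (M + |E|) := mul_le_mul_of_nonneg_left
            (le_trans (abs_sub _ _) (add_le_add (hgM x) le_rfl)) (abs_nonneg t)
    calc ∫ z, Real.exp (t * (f z - E)) ∂μN
        = ∫ w, Real.exp (t * (F w - E)) ∂(p.prod μn) := by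
          rw [htrans (fun z => Real.exp (t * (f z - E)))]
          simp only [hesymm]
          rfl
      _ = ∫ x, ∫ y, Real.exp (t * (f (Fin.cons y x) - E)) ∂p ∂μn :=
          integral_prod_symm _ hexpint
      _ ≤ ∫ x, Real.exp (t ^ 2 * c 0 ^ 2 / 8) * Real.exp (t * (g x - E)) ∂μn := by
          apply integral_mono_of_nonneg
          · exact Filter.Eventually.of_forall fun x =>
              integral_nonneg fun y => (Real.exp_pos _).le
          · exact (integrable_of_bounded
              (((hgmeas.sub measurable_const).const_mul t).exp) _ hgexpbound).const_mul _
          · exact Filter.Eventually.of_forall hinner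
      _ = Real.exp (t ^ 2 * c 0 ^ 2 / 8) * ∫ x, Real.exp (t * (g x - ∫ x', g x' ∂μn)) ∂μn := by
          rw [integral_const_mul, hEg]
      _ ≤ Real.exp (t ^ 2 * c 0 ^ 2 / 8) * Real.exp (t ^ 2 * (∑ i : Fin n, c i.succ ^ 2) / 8) :=
          mul_le_mul_of_nonneg_left
            (ih g hgmeas (fun i => c i.succ) (fun i => hc _) hgbdd t) (Real.exp_pos _).le
      _ = Real.exp (t ^ 2 * (∑ i, c i ^ 2) / 8) := by
          rw [← Real.exp_add, Fin.sum_univ_succ]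
          congr 1
          ring

end McDiarmid

end Aux

/-- McDiarmid's inequality: if `f` has the bounded differences property with
constants `c i`, and `X₁,…,Xₙ` are i.i.d. with law `p`, then
`P(f(X) − E[f(X)] > ε) ≤ exp(−2ε²/Σ cᵢ²)`. -/
theorem mcdiarmid {𝒳 : Type*} [MeasurableSpace 𝒳] (n : ℕ)
    (p : Measure 𝒳) [IsProbabilityMeasure p]
    (f : (Fin n → 𝒳) → ℝ) (hf : Measurable f)
    (c : Fin n → ℝ) (hc : ∀ i, 0 ≤ c i)
    (hbdd : ∀ (i : Fin n) (x : Fin n → 𝒳) (x' : 𝒳),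
      |f x - f (Function.update x i x')| ≤ c i)
    (ε : ℝ) (hε : 0 < ε) :
    (Measure.pi fun _ : Fin n => p)
        {x | f x - ∫ y, f y ∂(Measure.pi fun _ : Fin n => p) > ε}
      ≤ ENNReal.ofReal (Real.exp (-2 * ε ^ 2 / ∑ i, c i ^ 2)) := by
  classical
  set μN : Measure (Fin n → 𝒳) := Measure.pi fun _ => p with hμN
  haveI : IsProbabilityMeasure μN := by rw [hμN]; infer_instance
  set E : ℝ := ∫ y, f y ∂μN with hE
  set S : ℝ := ∑ i, c i ^ 2 with hS
  have hSnn : 0 ≤ S := Finset.sum_nonneg fun i _ => sq_nonneg _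
  have hne : Nonempty 𝒳 := by
    have h1 : p Set.univ ≠ 0 := by simp
    exact ⟨(MeasureTheory.nonempty_of_measure_ne_zero h1).some⟩
  set x₀ : Fin n → 𝒳 := fun _ => Classical.arbitrary 𝒳 with hx₀
  set M : ℝ := |f x₀| + ∑ i, c i with hM
  have hfM : ∀ x, |f x| ≤ M := by
    intro x
    have := bdd_diff_total f c hbdd x x₀
    have h1 := abs_sub_abs_le_abs_sub (f x) (f x₀)
    rw [hM]; linarith
  rcases eq_or_lt_of_le hSnn with hS0 | hSpos
  · -- degenerate case: all `c i = 0`, so `f` is constant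
    have hc0 : ∀ i, c i = 0 := by
      intro i
      have h1 : ∀ j ∈ Finset.univ, (0:ℝ) ≤ c j ^ 2 := fun j _ => sq_nonneg _
      have h2 := (Finset.sum_eq_zero_iff_of_nonneg h1).1 hS0.symm i (Finset.mem_univ i)
      exact pow_eq_zero_iff (two_ne_zero) |>.1 h2
    have hfc : ∀ x, f x = f x₀ := by
      intro x
      have h3 := bdd_diff_total f c hbdd x x₀
      have h4 : |f x - f x₀| ≤ 0 := by
        refine le_trans h3 (le_of_eq ?_)
        simp [hc0]
      have := abs_nonpos_iff.1 h4
      linarith [sub_eq_zero.1 this]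
    have hEeq : E = f x₀ := by
      rw [hE, show (fun y => f y) = fun _ : Fin n → 𝒳 => f x₀ from funext hfc]
      simp
    have hempty : {x : Fin n → 𝒳 | f x - E > ε} = ∅ := by
      ext x
      simp only [Set.mem_setOf_eq, Set.mem_empty_iff_false, iff_false, not_lt]
      rw [hfc x, hEeq]
      linarith
    rw [hempty]
    simp
  · -- main case
    set t : ℝ := 4 * ε / S with ht
    have htpos : 0 < t := by positivity
    have hXexpbdd : ∀ x, |Real.exp (t * (f x - E))| ≤ Real.exp (|t| * (M + |E|)) := by
      intro x
      rw [abs_of_pos (Real.exp_pos _)]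
      apply Real.exp_le_exp.2
      calc t * (f x - E) ≤ |t * (f x - E)| := le_abs_self _
        _ = |t| * |f x - E| := abs_mul _ _
        _ ≤ |t| * (M + |E|) := mul_le_mul_of_nonneg_left
            (le_trans (abs_sub _ _) (add_le_add (hfM x) le_rfl)) (abs_nonneg t)
    have hXint : Integrable (fun x => Real.exp (t * ((f x - E)))) μN :=
      integrable_of_bounded (((hf.sub measurable_const).const_mul t).exp) _ hXexpbdd
    have hchern := ProbabilityTheory.measure_ge_le_exp_mul_mgf (μ := μN)
      (X := fun x => f x - E) ε htpos.le hXint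
    have hmgf : ProbabilityTheory.mgf (fun x => f x - E) μN t ≤ Real.exp (t ^ 2 * S / 8) :=
      mgf_bound p n f hf c hc hbdd t
    have harith : -t * ε + t ^ 2 * S / 8 = -2 * ε ^ 2 / S := by
      rw [ht]
      field_simp
      ring
    have hfinal : (μN {x | ε ≤ f x - E}).toReal ≤ Real.exp (-2 * ε ^ 2 / S) := by
      calc (μN {x | ε ≤ f x - E}).toReal
          ≤ Real.exp (-t * ε) * ProbabilityTheory.mgf (fun x => f x - E) μN t := hchern
        _ ≤ Real.exp (-t * ε) * Real.exp (t ^ 2 * S / 8) :=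
            mul_le_mul_of_nonneg_left hmgf (Real.exp_pos _).le
        _ = Real.exp (-2 * ε ^ 2 / S) := by rw [← Real.exp_add, harith]
    calc μN {x | f x - E > ε}
        ≤ μN {x | ε ≤ f x - E} := measure_mono (fun x hx => by
          simp only [Set.mem_setOf_eq] at hx ⊢
          exact le_of_lt hx)
      _ = ENNReal.ofReal ((μN {x | ε ≤ f x - E}).toReal) :=
          (ENNReal.ofReal_toReal (measure_ne_top _ _)).symm
      _ ≤ ENNReal.ofReal (Real.exp (-2 * ε ^ 2 / S)) := ENNReal.ofReal_le_ofReal hfinal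
end

section
/- Let Z₁, Z₂, ... be i.i.d. real random variables with E[Z₁] > 0 and finite moment generating function E[e^{λZ₁}] for all λ ∈ ℝ. Then limₙ −(1/n)·log P(Σ_{k=1}^n Z_k ≤ 0) = sup_λ [−log E[e^{λ Z₁}]] (Cramér's theorem at threshold 0, lower-tail, for mean-positive variables); in particular P(Σ Z_k ≤ 0) ≤ exp(−n·sup_λ(−κ(λ))) for all n, where κ(λ) = log E[e^{λZ₁}]. -/
open MeasureTheory Filter Real ProbabilityTheory
open scoped ENNReal

namespace CramerAux

set_option linter.unusedSectionVars false
variable {Ω : Type*} [MeasurableSpace Ω] {P : Measure Ω} [IsProbabilityMeasure P]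
variable {X : Ω → ℝ}

lemma abs_le_exp_add (x : ℝ) : |x| ≤ exp x + exp (-x) := by
  rcases le_or_gt 0 x with h | h
  · rw [abs_of_nonneg h]
    have := Real.add_one_le_exp x
    nlinarith [Real.exp_pos (-x), Real.exp_pos x]
  · rw [abs_of_neg h]
    have := Real.add_one_le_exp (-x)
    nlinarith [Real.exp_pos (-x), Real.exp_pos x]

lemma exp_ball_le {l t x : ℝ} (ht : |t - l| ≤ 1) :
    exp (t * x) ≤ exp ((l + 1) * x) + exp ((l - 1) * x) := by
  rcases le_or_gt 0 x with h | h
  · have : t * x ≤ (l + 1) * x := by nlinarith [abs_le.1 ht]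
    have := Real.exp_le_exp.2 this
    nlinarith [Real.exp_pos ((l - 1) * x)]
  · have : t * x ≤ (l - 1) * x := by nlinarith [abs_le.1 ht]
    have := Real.exp_le_exp.2 this
    nlinarith [Real.exp_pos ((l + 1) * x)]

lemma abs_mul_exp_le (l x : ℝ) :
    |x| * exp (l * x) ≤ exp ((l + 1) * x) + exp ((l - 1) * x) := by
  have h := abs_le_exp_add x
  have hp := Real.exp_pos (l * x)
  have e1 : exp x * exp (l * x) = exp ((l + 1) * x) := by
    rw [← Real.exp_add]; ring_nf
  have e2 : exp (-x) * exp (l * x) = exp ((l - 1) * x) := by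
    rw [← Real.exp_add]; ring_nf
  nlinarith

lemma sq_le_four_exp (x : ℝ) : x ^ 2 ≤ 4 * (exp x + exp (-x)) := by
  have h := Real.add_one_le_exp (|x| / 2)
  have h2 : (|x| / 2 + 1) ^ 2 ≤ (exp (|x| / 2)) ^ 2 := by
    have : (0:ℝ) ≤ |x| / 2 + 1 := by positivity
    nlinarith
  have h3 : exp (|x| / 2) ^ 2 = exp |x| := by
    rw [sq, ← Real.exp_add]; ring_nf
  have h4 : exp |x| ≤ exp x + exp (-x) := by
    rcases le_or_gt 0 x with h | h
    · rw [abs_of_nonneg h]; nlinarith [Real.exp_pos (-x)]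
    · rw [abs_of_neg h]; nlinarith [Real.exp_pos x]
  have h5 : x ^ 2 = |x| ^ 2 := (sq_abs x).symm
  nlinarith [abs_nonneg x]

lemma sq_mul_exp_le (l x : ℝ) :
    x ^ 2 * exp (l * x) ≤ 4 * (exp ((l + 1) * x) + exp ((l - 1) * x)) := by
  have h := sq_le_four_exp x
  have hp := Real.exp_pos (l * x)
  have e1 : exp x * exp (l * x) = exp ((l + 1) * x) := by rw [← Real.exp_add]; ring_nf
  have e2 : exp (-x) * exp (l * x) = exp ((l - 1) * x) := by rw [← Real.exp_add]; ring_nf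
  nlinarith

section Integrability
variable (hXm : Measurable X) (hX : ∀ l : ℝ, Integrable (fun ω => exp (l * X ω)) P)
include hXm hX

lemma integrable_mul_exp (l : ℝ) :
    Integrable (fun ω => X ω * exp (l * X ω)) P := by
  refine Integrable.mono ((hX (l+1)).add (hX (l-1))) ?_ ?_
  · exact (hXm.mul ((hXm.const_mul l).exp)).aestronglyMeasurable
  · refine Filter.Eventually.of_forall fun ω => ?_
    have h := abs_mul_exp_le l (X ω)
    have hp := Real.exp_pos (l * X ω)
    have h2 : 0 ≤ exp ((l+1) * X ω) + exp ((l-1) * X ω) :=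
      by positivity
    simp only [Pi.add_apply, Real.norm_eq_abs]
    rw [abs_of_nonneg h2, abs_mul, abs_of_nonneg hp.le]
    exact h

lemma integrable_sq_mul_exp (l : ℝ) :
    Integrable (fun ω => X ω ^ 2 * exp (l * X ω)) P := by
  refine Integrable.mono (((hX (l+1)).add (hX (l-1))).const_mul 4) ?_ ?_
  · exact ((hXm.pow_const 2).mul ((hXm.const_mul l).exp)).aestronglyMeasurable
  · refine Filter.Eventually.of_forall fun ω => ?_
    have h := sq_mul_exp_le l (X ω)
    have hp := Real.exp_pos (l * X ω)
    have h2 : (0:ℝ) ≤ 4 * (exp ((l+1) * X ω) + exp ((l-1) * X ω)) := by positivity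
    simp only [Pi.add_apply, Real.norm_eq_abs]
    rw [abs_of_nonneg h2, abs_mul, abs_of_nonneg hp.le, abs_of_nonneg (sq_nonneg _)]
    exact h

lemma integrable_X : Integrable X P := by
  have h := integrable_mul_exp hXm hX 0
  simpa using h

lemma hasDerivAt_mgfX (l : ℝ) :
    HasDerivAt (fun t => ∫ ω, exp (t * X ω) ∂P) (∫ ω, X ω * exp (l * X ω) ∂P) l := by
  have key := hasDerivAt_integral_of_dominated_loc_of_deriv_le (E := ℝ)
    (F := fun t ω => exp (t * X ω)) (F' := fun t ω => X ω * exp (t * X ω))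
    (bound := fun ω => |X ω| * (exp ((l+1) * X ω) + exp ((l-1) * X ω)))
    (μ := P) (x₀ := l) (Metric.ball_mem_nhds l one_pos) ?_ (hX l) ?_ ?_ ?_ ?_
  · exact key.2
  · exact Filter.Eventually.of_forall fun t =>
      ((hXm.const_mul t).exp).aestronglyMeasurable
  · exact (hXm.mul ((hXm.const_mul l).exp)).aestronglyMeasurable
  · refine Filter.Eventually.of_forall fun ω => fun t ht => ?_
    have hb : |t - l| ≤ 1 := le_of_lt (by simpa [Real.dist_eq] using ht)
    have h := exp_ball_le (x := X ω) hb
    rw [Real.norm_eq_abs, abs_mul]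
    rw [abs_of_nonneg (Real.exp_pos _).le]
    exact mul_le_mul_of_nonneg_left h (abs_nonneg _)
  · -- integrable bound
    refine Integrable.mono (((hX (l+2)).add (hX l)).add ((hX l).add (hX (l-2)))) ?_ ?_
    · exact (hXm.abs.mul (((hXm.const_mul (l+1)).exp).add
        ((hXm.const_mul (l-1)).exp))).aestronglyMeasurable
    · refine Filter.Eventually.of_forall fun ω => ?_
      set x := X ω
      have h1 := abs_mul_exp_le (l+1) x
      have h2 := abs_mul_exp_le (l-1) x
      have e1 : (l+1+1) = l + 2 := by ring
      have e2 : (l+1-1) = l := by ring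
      have e3 : (l-1+1) = l := by ring
      have e4 : (l-1-1) = l - 2 := by ring
      rw [e1, e2] at h1
      rw [e3, e4] at h2
      have hnn : (0:ℝ) ≤ |x| * (exp ((l+1) * x) + exp ((l-1) * x)) := by positivity
      simp only [Pi.add_apply, Real.norm_eq_abs]
      rw [abs_of_nonneg hnn]
      refine le_trans ?_ (le_abs_self _)
      nlinarith [abs_nonneg x]
  · refine Filter.Eventually.of_forall fun ω => fun t _ => ?_
    have h : HasDerivAt (fun s : ℝ => s * X ω) (X ω) t := hasDerivAt_mul_const (X ω)
    simpa [mul_comm] using h.exp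

lemma hasDerivAt_AX (l : ℝ) :
    HasDerivAt (fun t => ∫ ω, X ω * exp (t * X ω) ∂P)
      (∫ ω, X ω ^ 2 * exp (l * X ω) ∂P) l := by
  have key := hasDerivAt_integral_of_dominated_loc_of_deriv_le (E := ℝ)
    (F := fun t ω => X ω * exp (t * X ω)) (F' := fun t ω => X ω ^ 2 * exp (t * X ω))
    (bound := fun ω => X ω ^ 2 * (exp ((l+1) * X ω) + exp ((l-1) * X ω)))
    (μ := P) (x₀ := l) (Metric.ball_mem_nhds l one_pos) ?_ (integrable_mul_exp hXm hX l) ?_ ?_ ?_ ?_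
  · exact key.2
  · exact Filter.Eventually.of_forall fun t =>
      (hXm.mul ((hXm.const_mul t).exp)).aestronglyMeasurable
  · exact ((hXm.pow_const 2).mul ((hXm.const_mul l).exp)).aestronglyMeasurable
  · refine Filter.Eventually.of_forall fun ω => fun t ht => ?_
    have hb : |t - l| ≤ 1 := le_of_lt (by simpa [Real.dist_eq] using ht)
    have h := exp_ball_le (x := X ω) hb
    rw [Real.norm_eq_abs, abs_mul, abs_of_nonneg (Real.exp_pos _).le,
      abs_of_nonneg (sq_nonneg _)]
    exact mul_le_mul_of_nonneg_left h (sq_nonneg _)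
  · -- integrable bound
    refine Integrable.mono ((((hX (l+2)).add (hX l)).add
      ((hX l).add (hX (l-2)))).const_mul 4) ?_ ?_
    · exact ((hXm.pow_const 2).mul (((hXm.const_mul (l+1)).exp).add
        ((hXm.const_mul (l-1)).exp))).aestronglyMeasurable
    · refine Filter.Eventually.of_forall fun ω => ?_
      set x := X ω
      have h1 := sq_mul_exp_le (l+1) x
      have h2 := sq_mul_exp_le (l-1) x
      have e1 : (l+1+1) = l + 2 := by ring
      have e2 : (l+1-1) = l := by ring
      have e3 : (l-1+1) = l := by ring
      have e4 : (l-1-1) = l - 2 := by ring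
      rw [e1, e2] at h1
      rw [e3, e4] at h2
      have hnn : (0:ℝ) ≤ x ^ 2 * (exp ((l+1) * x) + exp ((l-1) * x)) := by positivity
      simp only [Pi.add_apply, Real.norm_eq_abs]
      rw [abs_of_nonneg hnn]
      refine le_trans ?_ (le_abs_self _)
      nlinarith [sq_nonneg x]
  · refine Filter.Eventually.of_forall fun ω => fun t _ => ?_
    have h : HasDerivAt (fun s : ℝ => s * X ω) (X ω) t := hasDerivAt_mul_const (X ω)
    have h2 := (h.exp).const_mul (X ω)
    convert h2 using 1
    · rfl
    · ring

end Integrability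
noncomputable def Mf (P : Measure Ω) (X : Ω → ℝ) (l : ℝ) : ℝ := ∫ ω, exp (l * X ω) ∂P
noncomputable def Af (P : Measure Ω) (X : Ω → ℝ) (l : ℝ) : ℝ := ∫ ω, X ω * exp (l * X ω) ∂P
noncomputable def Bf (P : Measure Ω) (X : Ω → ℝ) (l : ℝ) : ℝ := ∫ ω, X ω ^ 2 * exp (l * X ω) ∂P
noncomputable def mf (P : Measure Ω) (X : Ω → ℝ) (l : ℝ) : ℝ := Af P X l / Mf P X l
noncomputable def κf (P : Measure Ω) (X : Ω → ℝ) (l : ℝ) : ℝ := log (Mf P X l)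

section MGFAnalysis
variable (hXm : Measurable X) (hX : ∀ l : ℝ, Integrable (fun ω => exp (l * X ω)) P)
include hXm hX

lemma Mf_pos (l : ℝ) : 0 < Mf P X l :=
  mgf_pos (hX l)

lemma integrable_sub_mul_exp (c l : ℝ) :
    Integrable (fun ω => (X ω - c) * exp (l * X ω)) P := by
  have h1 := integrable_mul_exp hXm hX l
  have h2 := (hX l).const_mul c
  have hsub : Integrable (fun ω => X ω * exp (l * X ω) - c * exp (l * X ω)) P := h1.sub h2
  refine hsub.congr (Filter.Eventually.of_forall fun ω => ?_)
  ring

lemma integral_sub_mul_exp (c l : ℝ) :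
    ∫ ω, (X ω - c) * exp (l * X ω) ∂P = Af P X l - c * Mf P X l := by
  have h1 := integrable_mul_exp hXm hX l
  have h2 := (hX l).const_mul c
  have : (fun ω => (X ω - c) * exp (l * X ω)) =
      fun ω => X ω * exp (l * X ω) - c * exp (l * X ω) := by
    funext ω; ring
  rw [this, integral_sub h1 h2, integral_const_mul]
  rfl

lemma integrable_sub_sq_mul_exp (c l : ℝ) :
    Integrable (fun ω => (X ω - c) ^ 2 * exp (l * X ω)) P := by
  have h1 := integrable_sq_mul_exp hXm hX l
  have h2 := (integrable_mul_exp hXm hX l).const_mul (2 * c)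
  have h3 := (hX l).const_mul (c ^ 2)
  have hsub : Integrable
      (fun ω => X ω ^ 2 * exp (l * X ω) - 2 * c * (X ω * exp (l * X ω))) P := h1.sub h2
  have hadd : Integrable (fun ω => X ω ^ 2 * exp (l * X ω) - 2 * c * (X ω * exp (l * X ω))
      + c ^ 2 * exp (l * X ω)) P := hsub.add h3
  refine hadd.congr (Filter.Eventually.of_forall fun ω => ?_)
  ring

lemma integral_sub_sq_mul_exp (c l : ℝ) :
    ∫ ω, (X ω - c) ^ 2 * exp (l * X ω) ∂P
      = Bf P X l - 2 * c * Af P X l + c ^ 2 * Mf P X l := by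
  have h1 := integrable_sq_mul_exp hXm hX l
  have h2 := (integrable_mul_exp hXm hX l).const_mul (2 * c)
  have h3 := (hX l).const_mul (c ^ 2)
  have heq : (fun ω => (X ω - c) ^ 2 * exp (l * X ω)) =
      fun ω => X ω ^ 2 * exp (l * X ω) - 2 * c * (X ω * exp (l * X ω))
        + c ^ 2 * exp (l * X ω) := by
    funext ω; ring
  have hsub : Integrable
      (fun ω => X ω ^ 2 * exp (l * X ω) - 2 * c * (X ω * exp (l * X ω))) P := h1.sub h2
  rw [heq, integral_add hsub h3, integral_sub h1 h2, integral_const_mul,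
    integral_const_mul]
  rfl

lemma D_eq_zero (l : ℝ) :
    ∫ ω, (X ω - mf P X l) * exp (l * X ω) ∂P = 0 := by
  rw [integral_sub_mul_exp hXm hX, mf, div_mul_cancel₀]
  · ring
  · exact (Mf_pos hXm hX l).ne'

lemma Cf_nonneg (c l : ℝ) : 0 ≤ ∫ ω, (X ω - c) ^ 2 * exp (l * X ω) ∂P :=
  integral_nonneg fun ω => by positivity

lemma BM_sub_A_sq_nonneg (l : ℝ) : 0 ≤ Bf P X l * Mf P X l - Af P X l ^ 2 := by
  have h := Cf_nonneg hXm hX (mf P X l) l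
  rw [integral_sub_sq_mul_exp hXm hX] at h
  have hM := Mf_pos hXm hX l
  rw [mf] at h
  have h2 : 0 ≤ Bf P X l - Af P X l ^ 2 / Mf P X l := by
    have e : Bf P X l - 2 * (Af P X l / Mf P X l) * Af P X l
        + (Af P X l / Mf P X l) ^ 2 * Mf P X l = Bf P X l - Af P X l ^ 2 / Mf P X l := by
      field_simp; ring
    linarith [e ▸ h]
  have := mul_le_mul_of_nonneg_right h2 hM.le
  rw [sub_mul, div_mul_cancel₀ _ hM.ne'] at this
  linarith

lemma hasDerivAt_mf (l : ℝ) :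
    HasDerivAt (mf P X)
      ((Bf P X l * Mf P X l - Af P X l * Af P X l) / Mf P X l ^ 2) l := by
  exact (hasDerivAt_AX hXm hX l).div (hasDerivAt_mgfX hXm hX l) (Mf_pos hXm hX l).ne'

lemma mf_monotone : Monotone (mf P X) := by
  refine monotone_of_deriv_nonneg (fun l => ((hasDerivAt_mf hXm hX l).differentiableAt)) ?_
  intro l
  rw [(hasDerivAt_mf hXm hX l).deriv]
  have h := BM_sub_A_sq_nonneg hXm hX l
  have hM := Mf_pos hXm hX l
  apply div_nonneg _ (sq_nonneg _)
  nlinarith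

lemma mf_continuous : Continuous (mf P X) :=
  continuous_iff_continuousAt.2 fun l => (hasDerivAt_mf hXm hX l).continuousAt

lemma hasDerivAt_κf (l : ℝ) : HasDerivAt (κf P X) (mf P X l) l := by
  have h := (hasDerivAt_mgfX hXm hX l).log (Mf_pos hXm hX l).ne'
  exact h

lemma κf_continuous : Continuous (κf P X) :=
  continuous_iff_continuousAt.2 fun l => (hasDerivAt_κf hXm hX l).continuousAt

lemma κf_isMin {l₁ : ℝ} (h : mf P X l₁ = 0) (l : ℝ) : κf P X l₁ ≤ κf P X l := by
  have hmono := mf_monotone hXm hX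
  rcases lt_trichotomy l l₁ with hl | hl | hl
  · obtain ⟨c, hc, hceq⟩ := exists_hasDerivAt_eq_slope (κf P X) (mf P X) hl
      (κf_continuous hXm hX).continuousOn (fun x _ => hasDerivAt_κf hXm hX x)
    have hc0 : mf P X c ≤ 0 := by
      rw [← h]; exact hmono hc.2.le
    rw [hceq] at hc0
    have hd : l₁ - l > 0 := by linarith
    have := div_nonpos_iff.1 hc0
    rcases this with ⟨h1, h2⟩ | ⟨h1, h2⟩
    · linarith
    · linarith
  · rw [hl]
  · obtain ⟨c, hc, hceq⟩ := exists_hasDerivAt_eq_slope (κf P X) (mf P X) hl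
      (κf_continuous hXm hX).continuousOn (fun x _ => hasDerivAt_κf hXm hX x)
    have hc0 : 0 ≤ mf P X c := by
      rw [← h]; exact hmono hc.1.le
    rw [hceq] at hc0
    have hd : l - l₁ > 0 := by linarith
    have := div_nonneg_iff.1 hc0
    rcases this with ⟨h1, h2⟩ | ⟨h1, h2⟩
    · linarith
    · linarith

lemma jensen_κf (l : ℝ) : l * ∫ ω, X ω ∂P ≤ κf P X l := by
  have hXi := integrable_X hXm hX
  have h : exp (∫ ω, l * X ω ∂P) ≤ ∫ ω, exp (l * X ω) ∂P := by
    refine ConvexOn.map_integral_le convexOn_exp continuous_exp.continuousOn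
      isClosed_univ ?_ (hXi.const_mul l) ?_
    · exact Filter.Eventually.of_forall fun ω => trivial
    · exact hX l
  rw [integral_const_mul] at h
  have := Real.log_le_log (exp_pos _) h
  rwa [Real.log_exp] at this

end MGFAnalysis
section ProbBounds
variable (hXm : Measurable X) (hX : ∀ l : ℝ, Integrable (fun ω => exp (l * X ω)) P)
include hXm hX

lemma prob_le_zero_le_Mf {l : ℝ} (hl : l ≤ 0) :
    (P {ω | X ω ≤ 0}).toReal ≤ Mf P X l := by
  have hs : MeasurableSet {ω | X ω ≤ 0} := hXm measurableSet_Iic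
  have h1 : (P {ω | X ω ≤ 0}).toReal
      = ∫ ω, Set.indicator {ω | X ω ≤ 0} (fun _ => (1:ℝ)) ω ∂P := by
    rw [integral_indicator_const _ hs]; simp [Measure.real]
  rw [h1]
  refine integral_mono ((integrable_const (1:ℝ)).indicator hs) (hX l) fun ω => ?_
  by_cases hω : X ω ≤ 0
  · rw [Set.indicator_of_mem (show ω ∈ {ω | X ω ≤ 0} from hω) (fun _ => (1:ℝ))]
    exact Real.one_le_exp (mul_nonneg_iff.2 (Or.inr ⟨hl, hω⟩))
  · rw [Set.indicator_of_notMem (show ω ∉ {ω | X ω ≤ 0} from hω) (fun _ => (1:ℝ))]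
    exact (Real.exp_pos _).le

lemma prob_eq_zero_le_Mf (l : ℝ) :
    (P {ω | X ω = 0}).toReal ≤ Mf P X l := by
  have hs : MeasurableSet {ω | X ω = 0} := hXm (measurableSet_singleton 0)
  have h1 : (P {ω | X ω = 0}).toReal
      = ∫ ω, Set.indicator {ω | X ω = 0} (fun _ => (1:ℝ)) ω ∂P := by
    rw [integral_indicator_const _ hs]; simp [Measure.real]
  rw [h1]
  refine integral_mono ((integrable_const (1:ℝ)).indicator hs) (hX l) fun ω => ?_
  by_cases hω : X ω = 0
  · rw [Set.indicator_of_mem (show ω ∈ {ω | X ω = 0} from hω) (fun _ => (1:ℝ)), hω]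
    simp
  · rw [Set.indicator_of_notMem (show ω ∉ {ω | X ω = 0} from hω) (fun _ => (1:ℝ))]
    exact (Real.exp_pos _).le

omit hXm hX in
lemma tendsto_Mf_atBot (hXm : Measurable X)
    (h0 : ∀ᵐ ω ∂P, 0 ≤ X ω) :
    Tendsto (fun n : ℕ => Mf P X (-(n:ℝ))) atTop
      (nhds (P {ω | X ω = 0}).toReal) := by
  have hs : MeasurableSet {ω | X ω = 0} := hXm (measurableSet_singleton 0)
  have hlim : (P {ω | X ω = 0}).toReal
      = ∫ ω, Set.indicator {ω | X ω = 0} (fun _ => (1:ℝ)) ω ∂P := by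
    rw [integral_indicator_const _ hs]; simp [Measure.real]
  rw [hlim]
  refine tendsto_integral_of_dominated_convergence (fun _ => (1:ℝ)) ?_ (integrable_const 1) ?_ ?_
  · exact fun n => ((hXm.const_mul _).exp).aestronglyMeasurable
  · intro n
    refine h0.mono fun ω hω => ?_
    rw [Real.norm_eq_abs, abs_of_nonneg (Real.exp_pos _).le]
    exact Real.exp_le_one_iff.2 (mul_nonpos_iff.2 (Or.inr ⟨by simp, hω⟩))
  · refine h0.mono fun ω hω => ?_
    rcases eq_or_lt_of_le hω with heq | hlt
    · have : X ω = 0 := heq.symm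
      simp only [this, mul_zero, Real.exp_zero]
      rw [Set.indicator_of_mem (by exact this)]
      exact tendsto_const_nhds
    · rw [Set.indicator_of_notMem (by exact ne_of_gt hlt)]
      have heq : ∀ n : ℕ, exp (-(n:ℝ) * X ω) = (exp (-X ω)) ^ n := by
        intro n
        rw [← Real.exp_nat_mul]
        ring_nf
      simp only [heq]
      exact tendsto_pow_atTop_nhds_zero_of_lt_one (Real.exp_pos _).le
        (Real.exp_lt_one_iff.2 (by linarith))

lemma exists_Af_neg (hneg : P {ω | X ω < 0} ≠ 0) : ∃ l : ℝ, l < 0 ∧ Af P X l < 0 := by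
  -- find c > 0 with P {X ≤ -c} ≠ 0
  obtain ⟨k, hk⟩ : ∃ k : ℕ, P {ω | X ω ≤ -(1 / (k + 1 : ℝ))} ≠ 0 := by
    by_contra hcon
    push_neg at hcon
    apply hneg
    have hsub : {ω | X ω < 0} ⊆ ⋃ k : ℕ, {ω | X ω ≤ -(1 / (k + 1 : ℝ))} := by
      intro ω hω
      simp only [Set.mem_setOf_eq] at hω
      obtain ⟨k, hk⟩ := exists_nat_gt (1 / (-X ω))
      refine Set.mem_iUnion.2 ⟨k, ?_⟩
      simp only [Set.mem_setOf_eq]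
      rw [div_lt_iff₀ (by linarith)] at hk
      have hk1 : 1 / (k + 1 : ℝ) ≤ (-X ω) := by
        rw [div_le_iff₀ (by positivity)]
        nlinarith
      linarith
    have : P (⋃ k : ℕ, {ω | X ω ≤ -(1 / (k + 1 : ℝ))}) = 0 :=
      measure_iUnion_null fun k => hcon k
    exact measure_mono_null hsub this
  set c : ℝ := 1 / (k + 1 : ℝ) with hc
  have hcpos : 0 < c := by positivity
  set s : Set Ω := {ω | X ω ≤ -c} with hsdef
  have hs : MeasurableSet s := hXm measurableSet_Iic
  set η : ℝ := (P s).toReal with hη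
  have hηpos : 0 < η := ENNReal.toReal_pos hk (measure_ne_top P s)
  have hXi := integrable_X hXm hX
  set K : ℝ := (∫ ω, max (X ω) 0 ∂P) + 1 with hK
  have hmaxint : Integrable (fun ω => max (X ω) 0) P := hXi.pos_part
  have hKpos : 0 < K := by
    have : 0 ≤ ∫ ω, max (X ω) 0 ∂P := integral_nonneg fun ω => le_max_right _ _
    linarith
  -- choose l
  set l : ℝ := -((max 0 (Real.log (K / (c * η))) + 1) / c) with hl
  have hlneg : l < 0 := by
    have h1 : 0 ≤ max 0 (Real.log (K / (c * η))) := le_max_left _ _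
    have h2 : 0 < (max 0 (Real.log (K / (c * η))) + 1) / c := by positivity
    rw [hl]
    exact neg_lt_zero.mpr h2
  refine ⟨l, hlneg, ?_⟩
  have hexp : K / (c * η) ≤ exp (-(l * c)) := by
    have h2 : -(l * c) = max 0 (Real.log (K / (c * η))) + 1 := by
      rw [hl, neg_mul, neg_neg, div_mul_cancel₀ _ hcpos.ne']
    rw [h2]
    calc K / (c * η) = exp (Real.log (K / (c * η))) := by
          rw [Real.exp_log (by positivity)]
      _ ≤ exp (max 0 (Real.log (K / (c * η))) + 1) := by
          apply Real.exp_le_exp.2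
          have := le_max_right 0 (Real.log (K / (c * η)))
          linarith
  -- pointwise bound
  have hpt : ∀ ω, X ω * exp (l * X ω) ≤ max (X ω) 0
      + (-(c * exp (-(l * c)))) * Set.indicator s (fun _ => (1:ℝ)) ω := by
    intro ω
    by_cases hω : X ω ≤ -c
    · rw [Set.indicator_of_mem (by exact hω)]
      have hx0 : X ω < 0 := by linarith
      have hmax : max (X ω) 0 = 0 := max_eq_right hx0.le
      rw [hmax]
      have h1 : X ω * exp (l * X ω) ≤ -c * exp (l * X ω) :=
        mul_le_mul_of_nonneg_right hω (Real.exp_pos _).le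
      have h2 : exp (-(l * c)) ≤ exp (l * X ω) := by
        apply Real.exp_le_exp.2
        nlinarith [hlneg]
      nlinarith [Real.exp_pos (l * X ω)]
    · rw [Set.indicator_of_notMem (by exact hω)]
      push_neg at hω
      simp only [mul_zero, add_zero]
      rcases le_or_gt (X ω) 0 with h | h
      · have : X ω * exp (l * X ω) ≤ 0 :=
          mul_nonpos_iff.2 (Or.inr ⟨h, (Real.exp_pos _).le⟩)
        exact this.trans (le_max_right _ _)
      · have he : exp (l * X ω) ≤ 1 :=
          Real.exp_le_one_iff.2 (mul_nonpos_iff.2 (Or.inr ⟨hlneg.le, h.le⟩))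
        have : X ω * exp (l * X ω) ≤ X ω := by nlinarith
        exact this.trans (le_max_left _ _)
  -- integrate
  have hind : Integrable (fun ω => Set.indicator s (fun _ => (1:ℝ)) ω) P :=
    (integrable_const (1:ℝ)).indicator hs
  have hrhs : Integrable (fun ω => max (X ω) 0
      + (-(c * exp (-(l * c)))) * Set.indicator s (fun _ => (1:ℝ)) ω) P :=
    hmaxint.add (hind.const_mul _)
  have hint := integral_mono (integrable_mul_exp hXm hX l) hrhs hpt
  rw [integral_add hmaxint (hind.const_mul _), integral_const_mul,
    integral_indicator_const _ hs] at hint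
  simp only [smul_eq_mul, mul_one] at hint
  rw [measureReal_def, ← hη] at hint
  have hAf : Af P X l ≤ (∫ ω, max (X ω) 0 ∂P) + (-(c * exp (-(l * c)))) * η := hint
  have hfin : c * exp (-(l * c)) * η ≥ K := by
    have h3 : K / (c * η) * (c * η) = K := by field_simp
    have h4 : c * exp (-(l*c)) * η = exp (-(l*c)) * (c * η) := by ring
    rw [h4]
    calc K = K / (c * η) * (c * η) := h3.symm
      _ ≤ exp (-(l*c)) * (c * η) :=
        mul_le_mul_of_nonneg_right hexp (by positivity)
  have hsum : (∫ ω, max (X ω) 0 ∂P) = K - 1 := by rw [hK]; ring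
  rw [hsum] at hAf
  have : Af P X l ≤ -1 := by nlinarith
  linarith

end ProbBounds
section Indep
variable {Z : ℕ → Ω → ℝ} (hmeas : ∀ i, Measurable (Z i))
  (hindep : iIndepFun Z P)
  (hident : ∀ i, IdentDistrib (Z i) (Z 0) P P)

include hmeas hident in
lemma transfer (g : ℝ → ℝ) (hg : Measurable g) (k : ℕ)
    (hint : Integrable (fun ω => g (Z 0 ω)) P) :
    Integrable (fun ω => g (Z k ω)) P ∧
      ∫ ω, g (Z k ω) ∂P = ∫ ω, g (Z 0 ω) ∂P := by
  have hid : IdentDistrib (fun ω => g (Z k ω)) (fun ω => g (Z 0 ω)) P P :=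
    (hident k).comp hg
  exact ⟨hid.integrable_iff.2 hint, hid.integral_eq⟩

include hmeas hindep in
lemma prod_integral (f : ℕ → ℝ → ℝ) (hf : ∀ k, Measurable (f k)) (s : Finset ℕ)
    (hint : ∀ k ∈ s, Integrable (fun ω => f k (Z k ω)) P) :
    Integrable (fun ω => ∏ k ∈ s, f k (Z k ω)) P ∧
      ∫ ω, ∏ k ∈ s, f k (Z k ω) ∂P = ∏ k ∈ s, ∫ ω, f k (Z k ω) ∂P := by
  classical
  induction s using Finset.induction_on with
  | empty => simp
  | @insert a s ha ih =>
    obtain ⟨ih1, ih2⟩ := ih fun k hk => hint k (Finset.mem_insert_of_mem hk)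
    have hY : iIndepFun
        (fun k => f k ∘ Z k) P := hindep.comp f hf
    have hIF : IndepFun (∏ j ∈ s, (f j ∘ Z j)) (f a ∘ Z a) P :=
      hY.indepFun_finsetProd_of_notMem (fun k => (hf k).comp (hmeas k)) ha
    have hprodfun : (∏ j ∈ s, (f j ∘ Z j)) = fun ω => ∏ j ∈ s, f j (Z j ω) := by
      funext ω
      simp [Finset.prod_apply]
    rw [hprodfun] at hIF
    have hinta : Integrable (fun ω => f a (Z a ω)) P := hint a (Finset.mem_insert_self a s)
    have hmul : Integrable (fun ω => (∏ j ∈ s, f j (Z j ω)) * f a (Z a ω)) P :=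
      hIF.integrable_mul ih1 hinta
    have hintmul := hIF.integral_fun_mul_eq_mul_integral ih1.aestronglyMeasurable hinta.aestronglyMeasurable
    constructor
    · refine hmul.congr (Filter.Eventually.of_forall fun ω => ?_)
      simp only [Finset.prod_insert ha]
      ring
    · have e1 : (fun ω => ∏ k ∈ insert a s, f k (Z k ω))
          = fun ω => (∏ j ∈ s, f j (Z j ω)) * f a (Z a ω) := by
        funext ω
        rw [Finset.prod_insert ha]
        ring
      have hintmul' : ∫ ω, (∏ j ∈ s, f j (Z j ω)) * f a (Z a ω) ∂P
          = (∫ ω, ∏ j ∈ s, f j (Z j ω) ∂P) * ∫ ω, f a (Z a ω) ∂P := hintmul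
      rw [e1, hintmul', ih2, Finset.prod_insert ha]
      ring

lemma exp_sum_eq (l : ℝ) (n : ℕ) (ω : Ω) :
    exp (l * ∑ k ∈ Finset.range n, Z k ω) = ∏ k ∈ Finset.range n, exp (l * Z k ω) := by
  rw [Finset.mul_sum, Real.exp_sum]

include hmeas hindep hident in
lemma integral_exp_S (hX : ∀ l : ℝ, Integrable (fun ω => exp (l * Z 0 ω)) P)
    (l : ℝ) (n : ℕ) :
    ∫ ω, exp (l * ∑ k ∈ Finset.range n, Z k ω) ∂P = (Mf P (Z 0) l) ^ n := by
  have hint : ∀ k ∈ Finset.range n, Integrable (fun ω => exp (l * Z k ω)) P :=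
    fun k _ => (transfer hmeas hident (fun x => exp (l * x))
      ((measurable_id.const_mul l).exp) k (hX l)).1
  have h := prod_integral hmeas hindep (fun _ x => exp (l * x))
    (fun _ => (measurable_id.const_mul l).exp) (Finset.range n) hint
  calc ∫ ω, exp (l * ∑ k ∈ Finset.range n, Z k ω) ∂P
      = ∫ ω, ∏ k ∈ Finset.range n, exp (l * Z k ω) ∂P := by
        congr 1; funext ω; exact exp_sum_eq l n ω
    _ = ∏ k ∈ Finset.range n, ∫ ω, exp (l * Z k ω) ∂P := h.2
    _ = ∏ _k ∈ Finset.range n, Mf P (Z 0) l := by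
        refine Finset.prod_congr rfl fun k _ => ?_
        exact (transfer hmeas hident (fun x => exp (l * x))
          ((measurable_id.const_mul l).exp) k (hX l)).2
    _ = (Mf P (Z 0) l) ^ n := by
        rw [Finset.prod_const, Finset.card_range]

include hmeas hindep hident in
lemma integral_centered_sq (hX : ∀ l : ℝ, Integrable (fun ω => exp (l * Z 0 ω)) P)
    (l : ℝ) {n : ℕ} (hn : 1 ≤ n) :
    Integrable (fun ω => (∑ k ∈ Finset.range n, Z k ω - n * mf P (Z 0) l) ^ 2
        * exp (l * ∑ k ∈ Finset.range n, Z k ω)) P ∧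
    ∫ ω, (∑ k ∈ Finset.range n, Z k ω - n * mf P (Z 0) l) ^ 2
        * exp (l * ∑ k ∈ Finset.range n, Z k ω) ∂P
      = n * (∫ ω, (Z 0 ω - mf P (Z 0) l) ^ 2 * exp (l * Z 0 ω) ∂P)
        * Mf P (Z 0) l ^ (n - 1) := by
  classical
  set m : ℝ := mf P (Z 0) l with hm
  set M : ℝ := Mf P (Z 0) l with hM
  set Cl : ℝ := ∫ ω, (Z 0 ω - m) ^ 2 * exp (l * Z 0 ω) ∂P with hCl
  set F : ℕ → ℕ → ℕ → ℝ → ℝ := fun j k i x =>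
    (if i = j then x - m else 1) * ((if i = k then x - m else 1) * exp (l * x)) with hF
  have hFm : ∀ j k i, Measurable (F j k i) := by
    intro j k i
    have g1 : Measurable (fun x : ℝ => (if i = j then x - m else 1)) := by
      by_cases h : i = j <;> simp only [h, if_true, if_false] <;> fun_prop
    have g2 : Measurable (fun x : ℝ => (if i = k then x - m else 1)) := by
      by_cases h : i = k <;> simp only [h, if_true, if_false] <;> fun_prop
    exact g1.mul (g2.mul ((measurable_id.const_mul l).exp))
  have hX0m : Measurable (Z 0) := hmeas 0
  have hFint0 : ∀ j k i, Integrable (fun ω => F j k i (Z 0 ω)) P := by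
    intro j k i
    by_cases h1 : i = j
    · by_cases h2 : i = k
      · simp only [hF, if_pos h1, if_pos h2]
        refine (integrable_sub_sq_mul_exp hX0m hX m l).congr
          (Filter.Eventually.of_forall fun ω => ?_)
        ring
      · simp only [hF, if_pos h1, if_neg h2]
        refine (integrable_sub_mul_exp hX0m hX m l).congr
          (Filter.Eventually.of_forall fun ω => ?_)
        ring
    · by_cases h2 : i = k
      · simp only [hF, if_neg h1, if_pos h2]
        refine (integrable_sub_mul_exp hX0m hX m l).congr
          (Filter.Eventually.of_forall fun ω => ?_)
        ring
      · simp only [hF, if_neg h1, if_neg h2]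
        refine (hX l).congr (Filter.Eventually.of_forall fun ω => ?_)
        ring
  have hFint : ∀ j k i, Integrable (fun ω => F j k i (Z i ω)) P :=
    fun j k i => (transfer hmeas hident (F j k i) (hFm j k i) i (hFint0 j k i)).1
  -- value of single-coordinate integrals
  have hD : ∫ ω, (Z 0 ω - m) * exp (l * Z 0 ω) ∂P = 0 := by
    have := D_eq_zero hX0m hX l
    rw [← hm] at this
    exact this
  have hval : ∀ j k i, ∫ ω, F j k i (Z i ω) ∂P =
      (if i = j then (if i = k then Cl else 0) else (if i = k then 0 else M)) := by
    intro j k i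
    rw [(transfer hmeas hident (F j k i) (hFm j k i) i (hFint0 j k i)).2]
    by_cases h1 : i = j
    · by_cases h2 : i = k
      · simp only [hF, if_pos h1, if_pos h2]
        rw [hCl]
        congr 1
        funext ω
        ring
      · simp only [hF, if_pos h1, if_neg h2]
        rw [← hD]
        congr 1
        funext ω
        ring
    · by_cases h2 : i = k
      · simp only [hF, if_neg h1, if_pos h2]
        rw [← hD]
        congr 1
        funext ω
        ring
      · simp only [hF, if_neg h1, if_neg h2]
        rw [hM]
        unfold Mf
        congr 1
        funext ω
        ring
  -- pointwise expansion
  have hpt : ∀ ω, (∑ k ∈ Finset.range n, Z k ω - n * m) ^ 2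
      * exp (l * ∑ k ∈ Finset.range n, Z k ω)
      = ∑ j ∈ Finset.range n, ∑ k ∈ Finset.range n,
          ∏ i ∈ Finset.range n, F j k i (Z i ω) := by
    intro ω
    have hprodF : ∀ j ∈ Finset.range n, ∀ k ∈ Finset.range n,
        ∏ i ∈ Finset.range n, F j k i (Z i ω)
        = ((Z j ω - m) * (Z k ω - m)) * exp (l * ∑ i ∈ Finset.range n, Z i ω) := by
      intro j hj k hk
      have e1 : ∏ i ∈ Finset.range n, F j k i (Z i ω)
          = (∏ i ∈ Finset.range n, (if i = j then Z i ω - m else 1))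
            * ((∏ i ∈ Finset.range n, (if i = k then Z i ω - m else 1))
              * ∏ i ∈ Finset.range n, exp (l * Z i ω)) := by
        simp only [hF]
        rw [Finset.prod_mul_distrib, Finset.prod_mul_distrib]
      rw [e1, Finset.prod_ite_eq' (Finset.range n) j (fun i => Z i ω - m),
        Finset.prod_ite_eq' (Finset.range n) k (fun i => Z i ω - m),
        if_pos hj, if_pos hk, ← exp_sum_eq]
      ring
    have hsum : ∑ j ∈ Finset.range n, (Z j ω - m)
        = ∑ k ∈ Finset.range n, Z k ω - n * m := by
      rw [Finset.sum_sub_distrib, Finset.sum_const, Finset.card_range, nsmul_eq_mul]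
    calc (∑ k ∈ Finset.range n, Z k ω - n * m) ^ 2
          * exp (l * ∑ k ∈ Finset.range n, Z k ω)
        = ((∑ j ∈ Finset.range n, (Z j ω - m)) * (∑ k ∈ Finset.range n, (Z k ω - m)))
            * exp (l * ∑ i ∈ Finset.range n, Z i ω) := by
          rw [hsum]; ring
      _ = ∑ j ∈ Finset.range n, ∑ k ∈ Finset.range n,
            ((Z j ω - m) * (Z k ω - m)) * exp (l * ∑ i ∈ Finset.range n, Z i ω) := by
          rw [Finset.sum_mul_sum]
          rw [Finset.sum_mul]
          refine Finset.sum_congr rfl fun j _ => ?_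
          rw [Finset.sum_mul]
      _ = ∑ j ∈ Finset.range n, ∑ k ∈ Finset.range n,
            ∏ i ∈ Finset.range n, F j k i (Z i ω) := by
          refine Finset.sum_congr rfl fun j hj => Finset.sum_congr rfl fun k hk => ?_
          exact (hprodF j hj k hk).symm
  -- integrate
  have hprodint : ∀ j k, Integrable (fun ω => ∏ i ∈ Finset.range n, F j k i (Z i ω)) P ∧
      ∫ ω, ∏ i ∈ Finset.range n, F j k i (Z i ω) ∂P
        = ∏ i ∈ Finset.range n, ∫ ω, F j k i (Z i ω) ∂P :=
    fun j k => prod_integral hmeas hindep (F j k) (hFm j k) _ (fun i _ => hFint j k i)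
  have hperjk : ∀ j ∈ Finset.range n, ∀ k ∈ Finset.range n,
      ∫ ω, ∏ i ∈ Finset.range n, F j k i (Z i ω) ∂P
        = if j = k then Cl * M ^ (n - 1) else 0 := by
    intro j hj k hk
    rw [(hprodint j k).2]
    by_cases hjk : j = k
    · subst hjk
      rw [if_pos rfl]
      rw [← Finset.mul_prod_erase _ _ hj]
      have hfj : ∫ ω, F j j j (Z j ω) ∂P = Cl := by
        rw [hval j j j]; simp
      rw [hfj]
      congr 1
      have hrest : ∀ i ∈ (Finset.range n).erase j, ∫ ω, F j j i (Z i ω) ∂P = M := by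
        intro i hi
        have hne : i ≠ j := Finset.ne_of_mem_erase hi
        rw [hval j j i, if_neg hne, if_neg hne]
      rw [Finset.prod_congr rfl hrest, Finset.prod_const,
        Finset.card_erase_of_mem hj, Finset.card_range]
    · rw [if_neg hjk]
      refine Finset.prod_eq_zero hj ?_
      rw [hval j k j, if_pos rfl, if_neg hjk]
  have hinner : ∀ j, Integrable
      (fun ω => ∑ k ∈ Finset.range n, ∏ i ∈ Finset.range n, F j k i (Z i ω)) P :=
    fun j => integrable_finset_sum _ fun k _ => (hprodint j k).1
  constructor
  · have hsumint : Integrable (fun ω => ∑ j ∈ Finset.range n, ∑ k ∈ Finset.range n,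
        ∏ i ∈ Finset.range n, F j k i (Z i ω)) P :=
      integrable_finset_sum _ fun j _ => hinner j
    exact hsumint.congr (Filter.Eventually.of_forall fun ω => (hpt ω).symm)
  calc ∫ ω, (∑ k ∈ Finset.range n, Z k ω - n * m) ^ 2
        * exp (l * ∑ k ∈ Finset.range n, Z k ω) ∂P
      = ∫ ω, ∑ j ∈ Finset.range n, ∑ k ∈ Finset.range n,
          ∏ i ∈ Finset.range n, F j k i (Z i ω) ∂P := by
        congr 1; funext ω; exact hpt ω
    _ = ∑ j ∈ Finset.range n, ∫ ω, ∑ k ∈ Finset.range n,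
          ∏ i ∈ Finset.range n, F j k i (Z i ω) ∂P :=
        integral_finset_sum _ (fun j _ => hinner j)
    _ = ∑ j ∈ Finset.range n, ∑ k ∈ Finset.range n,
          ∫ ω, ∏ i ∈ Finset.range n, F j k i (Z i ω) ∂P :=
        Finset.sum_congr rfl fun j _ =>
          integral_finset_sum _ (fun k _ => (hprodint j k).1)
    _ = ∑ j ∈ Finset.range n, ∑ k ∈ Finset.range n,
          (if j = k then Cl * M ^ (n - 1) else 0) :=
        Finset.sum_congr rfl fun j hj => Finset.sum_congr rfl fun k hk =>
          hperjk j hj k hk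
    _ = ∑ j ∈ Finset.range n, Cl * M ^ (n - 1) := by
        refine Finset.sum_congr rfl fun j hj => ?_
        rw [Finset.sum_ite_eq (Finset.range n) j (fun _ => Cl * M ^ (n - 1)), if_pos hj]
    _ = n * Cl * M ^ (n - 1) := by
        rw [Finset.sum_const, Finset.card_range, nsmul_eq_mul]
        ring

include hmeas hindep hident in
lemma integrable_exp_S (hX : ∀ l : ℝ, Integrable (fun ω => exp (l * Z 0 ω)) P)
    (l : ℝ) (n : ℕ) :
    Integrable (fun ω => exp (l * ∑ k ∈ Finset.range n, Z k ω)) P := by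
  have h := prod_integral hmeas hindep (fun _ x => exp (l * x))
    (fun _ => (measurable_id.const_mul l).exp) (Finset.range n)
    (fun k _ => (transfer hmeas hident (fun x => exp (l * x))
      ((measurable_id.const_mul l).exp) k (hX l)).1)
  refine h.1.congr (Filter.Eventually.of_forall fun ω => ?_)
  exact (exp_sum_eq l n ω).symm

include hmeas hindep hident in
lemma chernoff_n (hX : ∀ l : ℝ, Integrable (fun ω => exp (l * Z 0 ω)) P)
    {l : ℝ} (hl : l ≤ 0) (n : ℕ) :
    (P {ω | ∑ k ∈ Finset.range n, Z k ω ≤ 0}).toReal ≤ Mf P (Z 0) l ^ n := by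
  have hint : Integrable (fun ω => exp (l * ∑ k ∈ Finset.range n, Z k ω)) P := by
    have h := prod_integral hmeas hindep (fun _ x => exp (l * x))
      (fun _ => (measurable_id.const_mul l).exp) (Finset.range n)
      (fun k _ => (transfer hmeas hident (fun x => exp (l * x))
        ((measurable_id.const_mul l).exp) k (hX l)).1)
    refine h.1.congr (Filter.Eventually.of_forall fun ω => ?_)
    exact (exp_sum_eq l n ω).symm
  have h := measure_le_le_exp_mul_mgf (X := fun ω => ∑ k ∈ Finset.range n, Z k ω)
    (μ := P) (t := l) 0 hl hint
  simp only [mul_zero, Real.exp_zero, one_mul] at h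
  refine h.trans ?_
  have : mgf (fun ω => ∑ k ∈ Finset.range n, Z k ω) P l
      = ∫ ω, exp (l * ∑ k ∈ Finset.range n, Z k ω) ∂P := rfl
  rw [this, integral_exp_S hmeas hindep hident hX l n]

include hmeas hindep hident in
lemma prob_pow_le (n : ℕ) :
    (P {ω | Z 0 ω ≤ 0}) ^ n ≤ P {ω | ∑ k ∈ Finset.range n, Z k ω ≤ 0} := by
  have hsubset : (⋂ k ∈ Finset.range n, Z k ⁻¹' (Set.Iic 0))
      ⊆ {ω | ∑ k ∈ Finset.range n, Z k ω ≤ 0} := by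
    intro ω hω
    simp only [Set.mem_iInter, Set.mem_preimage, Set.mem_Iic] at hω
    exact Finset.sum_nonpos fun k hk => hω k hk
  have hinter := hindep.meas_biInter (S := Finset.range n)
    (s := fun k => Z k ⁻¹' (Set.Iic 0))
    (fun k _ => ⟨Set.Iic 0, measurableSet_Iic, rfl⟩)
  have heach : ∀ k, P (Z k ⁻¹' (Set.Iic 0)) = P {ω | Z 0 ω ≤ 0} := by
    intro k
    have := (hident k).measure_mem_eq (s := Set.Iic 0) measurableSet_Iic
    simpa [Set.preimage, Set.mem_Iic] using this
  calc (P {ω | Z 0 ω ≤ 0}) ^ n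
      = ∏ k ∈ Finset.range n, P (Z k ⁻¹' (Set.Iic 0)) := by
        rw [Finset.prod_congr rfl fun k _ => heach k, Finset.prod_const,
          Finset.card_range]
    _ = P (⋂ k ∈ Finset.range n, Z k ⁻¹' (Set.Iic 0)) := hinter.symm
    _ ≤ P {ω | ∑ k ∈ Finset.range n, Z k ω ≤ 0} := measure_mono hsubset

include hmeas hindep hident in
lemma prob_eq_pow_of_nonneg (h0 : P {ω | Z 0 ω < 0} = 0) (n : ℕ) :
    P {ω | ∑ k ∈ Finset.range n, Z k ω ≤ 0} = (P {ω | Z 0 ω = 0}) ^ n := by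
  have hae : ∀ k : ℕ, ∀ᵐ ω ∂P, 0 ≤ Z k ω := by
    intro k
    have heq : P (Z k ⁻¹' (Set.Iio 0)) = P (Z 0 ⁻¹' (Set.Iio 0)) :=
      (hident k).measure_mem_eq measurableSet_Iio
    have h0' : P (Z 0 ⁻¹' (Set.Iio 0)) = 0 := by
      have : (Z 0 ⁻¹' (Set.Iio 0)) = {ω | Z 0 ω < 0} := rfl
      rw [this, h0]
    rw [ae_iff]
    have : {ω | ¬0 ≤ Z k ω} = Z k ⁻¹' (Set.Iio 0) := by
      ext ω; simp [not_le]
    rw [this, heq, h0']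
  have haeall : ∀ᵐ ω ∂P, ∀ k ∈ Finset.range n, 0 ≤ Z k ω := by
    rw [Filter.eventually_all_finset]
    exact fun k _ => hae k
  have hseteq : {ω | ∑ k ∈ Finset.range n, Z k ω ≤ 0}
      =ᶠ[MeasureTheory.ae P] ⋂ k ∈ Finset.range n, Z k ⁻¹' {(0:ℝ)} := by
    rw [Filter.eventuallyEq_set]
    refine haeall.mono fun ω hω => ?_
    simp only [Set.mem_setOf_eq, Set.mem_iInter, Set.mem_preimage,
      Set.mem_singleton_iff]
    constructor
    · intro hsum k hk
      have hzero : ∑ k ∈ Finset.range n, Z k ω = 0 :=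
        le_antisymm hsum (Finset.sum_nonneg hω)
      exact (Finset.sum_eq_zero_iff_of_nonneg hω).1 hzero k hk
    · intro hall
      rw [Finset.sum_eq_zero hall]
  rw [measure_congr hseteq]
  have hinter := hindep.meas_biInter (S := Finset.range n)
    (s := fun k => Z k ⁻¹' {(0:ℝ)})
    (fun k _ => ⟨{(0:ℝ)}, measurableSet_singleton 0, rfl⟩)
  rw [hinter]
  have heach : ∀ k, P (Z k ⁻¹' {(0:ℝ)}) = P {ω | Z 0 ω = 0} := by
    intro k
    have := (hident k).measure_mem_eq (s := {(0:ℝ)}) (measurableSet_singleton 0)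
    simpa [Set.preimage] using this
  rw [Finset.prod_congr rfl fun k _ => heach k, Finset.prod_const, Finset.card_range]

include hmeas hindep hident in
lemma lower_bound (hX : ∀ l : ℝ, Integrable (fun ω => exp (l * Z 0 ω)) P)
    {l ε : ℝ} (hl : l < 0) (heps : 0 < ε)
    (hme : mf P (Z 0) l + ε ≤ 0) {n : ℕ} (hn : 1 ≤ n) :
    Real.exp ((n:ℝ) * (κf P (Z 0) l - l * (mf P (Z 0) l - ε)))
      * (1 - (∫ ω, (Z 0 ω - mf P (Z 0) l) ^ 2 * exp (l * Z 0 ω) ∂P)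
          / (Mf P (Z 0) l * n * ε ^ 2))
      ≤ (P {ω | ∑ k ∈ Finset.range n, Z k ω ≤ 0}).toReal := by
  set m : ℝ := mf P (Z 0) l with hm
  set M : ℝ := Mf P (Z 0) l with hM
  set Cl : ℝ := ∫ ω, (Z 0 ω - m) ^ 2 * exp (l * Z 0 ω) ∂P with hCl
  have hMpos : 0 < M := Mf_pos (hmeas 0) hX l
  have hClnn : 0 ≤ Cl := Cf_nonneg (hmeas 0) hX m l
  set S : Ω → ℝ := fun ω => ∑ k ∈ Finset.range n, Z k ω with hS
  have hSm : Measurable S := Finset.measurable_sum _ (fun k _ => hmeas k)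
  have hnR : (1:ℝ) ≤ (n:ℝ) := by exact_mod_cast hn
  have hnpos : (0:ℝ) < n := by linarith
  set Bs : Set Ω := {ω | |S ω - n * m| < n * ε} with hBs
  have hBmeas : MeasurableSet Bs := by
    have : Bs = (fun ω => |S ω - n * m|) ⁻¹' (Set.Iio (n * ε)) := rfl
    rw [this]
    exact ((hSm.sub_const _).abs) measurableSet_Iio
  have hgint : Integrable (fun ω => exp (l * S ω)) P :=
    integrable_exp_S hmeas hindep hident hX l n
  have hsub : Bs ⊆ {ω | S ω ≤ 0} := by
    intro ω hω
    have h2 := abs_lt.1 (show |S ω - (n:ℝ) * m| < (n:ℝ) * ε from hω)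
    have : S ω < (n:ℝ) * (m + ε) := by nlinarith [h2.2]
    have hle : (n:ℝ) * (m + ε) ≤ 0 := mul_nonpos_iff.2 (Or.inl ⟨hnpos.le, hme⟩)
    exact le_of_lt (lt_of_lt_of_le this hle)
  set c : ℝ := (n:ℝ) * (m - ε) with hc
  -- step 1
  have hPB : (P Bs).toReal = ∫ ω, Set.indicator Bs (fun _ => (1:ℝ)) ω ∂P := by
    rw [integral_indicator_const _ hBmeas]; simp [Measure.real]
  have hindSc : Integrable (fun ω => Set.indicator Bs
      (fun ω' => exp (l * (S ω' - c))) ω) P := by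
    have h1 : Integrable (fun ω => exp (-(l * c)) * exp (l * S ω)) P :=
      hgint.const_mul _
    have h2 := (h1.indicator hBmeas)
    refine h2.congr (Filter.Eventually.of_forall fun ω => ?_)
    by_cases hω : ω ∈ Bs
    · simp only [Set.indicator_of_mem hω]
      rw [← Real.exp_add]
      congr 1
      ring
    · simp only [Set.indicator_of_notMem hω]
  have step1 : ∫ ω, Set.indicator Bs (fun ω' => exp (l * (S ω' - c))) ω ∂P
      ≤ (P Bs).toReal := by
    rw [hPB]
    refine integral_mono hindSc ((integrable_const 1).indicator hBmeas) fun ω => ?_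
    by_cases hω : ω ∈ Bs
    · rw [Set.indicator_of_mem hω, Set.indicator_of_mem hω]
      apply Real.exp_le_one_iff.2
      have h2 := abs_lt.1 (show |S ω - (n:ℝ) * m| < (n:ℝ) * ε from hω)
      have hpos : 0 < S ω - c := by
        rw [hc]; nlinarith [h2.1]
      exact mul_nonpos_iff.2 (Or.inr ⟨hl.le, by linarith⟩)
    · rw [Set.indicator_of_notMem hω, Set.indicator_of_notMem hω]
  -- step 2 : pull out constant
  have hindS : Integrable (fun ω => Set.indicator Bs (fun ω' => exp (l * S ω')) ω) P :=
    hgint.indicator hBmeas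
  have step2 : ∫ ω, Set.indicator Bs (fun ω' => exp (l * (S ω' - c))) ω ∂P
      = exp (-(l * c)) * ∫ ω, Set.indicator Bs (fun ω' => exp (l * S ω')) ω ∂P := by
    rw [← integral_const_mul]
    congr 1
    funext ω
    by_cases hω : ω ∈ Bs
    · rw [Set.indicator_of_mem hω, Set.indicator_of_mem hω, ← Real.exp_add]
      congr 1
      ring
    · rw [Set.indicator_of_notMem hω, Set.indicator_of_notMem hω]
      ring
  -- step 3 : indicator splitting
  have hcompl : Integrable (fun ω => Set.indicator Bsᶜ (fun ω' => exp (l * S ω')) ω) P :=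
    hgint.indicator hBmeas.compl
  have step3 : ∫ ω, Set.indicator Bs (fun ω' => exp (l * S ω')) ω ∂P
      = M ^ n - ∫ ω, Set.indicator Bsᶜ (fun ω' => exp (l * S ω')) ω ∂P := by
    have hsplit : ∀ ω, Set.indicator Bs (fun ω' => exp (l * S ω')) ω
        + Set.indicator Bsᶜ (fun ω' => exp (l * S ω')) ω = exp (l * S ω) := by
      intro ω
      by_cases hω : ω ∈ Bs
      · rw [Set.indicator_of_mem hω, Set.indicator_of_notMem (by simpa using hω)]
        ring
      · rw [Set.indicator_of_notMem hω, Set.indicator_of_mem (by simpa using hω)]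
        ring
    have htot : ∫ ω, exp (l * S ω) ∂P = M ^ n := by
      rw [hM]
      exact integral_exp_S hmeas hindep hident hX l n
    have := integral_add hindS hcompl
    have h2 : ∫ ω, (Set.indicator Bs (fun ω' => exp (l * S ω')) ω
        + Set.indicator Bsᶜ (fun ω' => exp (l * S ω')) ω) ∂P = M ^ n := by
      rw [← htot]
      congr 1
      funext ω
      exact hsplit ω
    rw [this] at h2
    linarith
  -- step 4 : Chebyshev
  have hvar := integral_centered_sq hmeas hindep hident hX l hn
  rw [← hm, ← hM, ← hCl] at hvar
  have step4 : ∫ ω, Set.indicator Bsᶜ (fun ω' => exp (l * S ω')) ω ∂P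
      ≤ Cl * M ^ (n - 1) / (n * ε ^ 2) := by
    have hptc : ∀ ω, Set.indicator Bsᶜ (fun ω' => exp (l * S ω')) ω
        ≤ ((n:ℝ) * ε)⁻¹ ^ 2 * ((S ω - n * m) ^ 2 * exp (l * S ω)) := by
      intro ω
      by_cases hω : ω ∈ Bsᶜ
      · rw [Set.indicator_of_mem hω]
        have hnot : ¬(|S ω - (n:ℝ) * m| < (n:ℝ) * ε) := hω
        have habs : n * ε ≤ |S ω - n * m| := not_lt.1 hnot
        have hsq : ((n:ℝ) * ε) ^ 2 ≤ (S ω - n * m) ^ 2 := by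
          rw [← sq_abs (S ω - n * m)]
          exact pow_le_pow_left₀ (by positivity) habs 2
        have hne : ((n:ℝ) * ε) ^ 2 ≠ 0 := by positivity
        have hinvpos : 0 < ((n:ℝ) * ε)⁻¹ ^ 2 := by positivity
        have hid : ((n:ℝ) * ε)⁻¹ ^ 2 * ((n:ℝ) * ε) ^ 2 = 1 := by
          rw [← mul_pow, inv_mul_cancel₀ (by positivity : ((n:ℝ) * ε) ≠ 0)]
          norm_num
        have h1 : (1:ℝ) ≤ ((n:ℝ) * ε)⁻¹ ^ 2 * (S ω - n * m) ^ 2 :=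
          hid ▸ mul_le_mul_of_nonneg_left hsq hinvpos.le
        nlinarith [Real.exp_pos (l * S ω), sq_nonneg (S ω - n*m)]
      · rw [Set.indicator_of_notMem hω]
        positivity
    have hintmono := integral_mono hcompl ((hvar.1).const_mul (((n:ℝ) * ε)⁻¹ ^ 2)) hptc
    rw [integral_const_mul, hvar.2] at hintmono
    refine hintmono.trans (le_of_eq ?_)
    field_simp
  -- combine
  obtain ⟨nn, rfl⟩ : ∃ nn, n = nn + 1 := ⟨n - 1, (Nat.succ_pred_eq_of_pos hn).symm⟩
  have hexpM : exp ((↑(nn+1) : ℝ) * κf P (Z 0) l) = M ^ (nn+1) := by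
    rw [Real.exp_nat_mul]
    congr 1
    rw [hM, κf, Real.exp_log hMpos]
  have hLHS : Real.exp ((↑(nn+1):ℝ) * (κf P (Z 0) l - l * (m - ε)))
      * (1 - Cl / (M * (↑(nn+1):ℝ) * ε ^ 2))
      = exp (-(l * c)) * (M ^ (nn+1) - Cl * M ^ (nn+1-1) / ((↑(nn+1):ℝ) * ε ^ 2)) := by
    have e1 : (↑(nn+1):ℝ) * (κf P (Z 0) l - l * (m - ε))
        = (↑(nn+1):ℝ) * κf P (Z 0) l + (-(l * c)) := by
      rw [hc]; ring
    rw [e1, Real.exp_add, hexpM]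
    have hMn : (0:ℝ) < M ^ (nn+1) := pow_pos hMpos _
    have e2 : M ^ (nn+1) * (Cl / (M * (↑(nn+1):ℝ) * ε ^ 2))
        = Cl * M ^ (nn+1-1) / ((↑(nn+1):ℝ) * ε ^ 2) := by
      have : M ^ (nn+1) = M ^ nn * M := pow_succ M nn
      rw [this]
      have hsimp : (nn+1-1) = nn := by omega
      rw [hsimp]
      field_simp
    linear_combination (-(Real.exp (-(l * c)))) * e2
  rw [hLHS]
  have hstep34 : M ^ (nn+1) - Cl * M ^ (nn+1-1) / ((↑(nn+1):ℝ) * ε ^ 2)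
      ≤ ∫ ω, Set.indicator Bs (fun ω' => exp (l * S ω')) ω ∂P := by
    rw [step3]
    have := step4
    linarith
  have hfinal : exp (-(l * c)) * (M ^ (nn+1) - Cl * M ^ (nn+1-1) / ((↑(nn+1):ℝ) * ε ^ 2))
      ≤ (P Bs).toReal := by
    calc exp (-(l * c)) * (M ^ (nn+1) - Cl * M ^ (nn+1-1) / ((↑(nn+1):ℝ) * ε ^ 2))
        ≤ exp (-(l * c)) * ∫ ω, Set.indicator Bs (fun ω' => exp (l * S ω')) ω ∂P :=
          mul_le_mul_of_nonneg_left hstep34 (Real.exp_pos _).le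
      _ = ∫ ω, Set.indicator Bs (fun ω' => exp (l * (S ω' - c))) ω ∂P := step2.symm
      _ ≤ (P Bs).toReal := step1
  refine hfinal.trans ?_
  exact ENNReal.toReal_mono (measure_ne_top P _) (measure_mono hsub)

include hmeas hindep hident in
lemma main_nonneg (hX : ∀ l : ℝ, Integrable (fun ω => exp (l * Z 0 ω)) P)
    (h0 : P {ω | Z 0 ω < 0} = 0) :
    Tendsto (fun n : ℕ => -(1 / (n : ℝ)) *
        Real.log ((P {ω | ∑ k ∈ Finset.range n, Z k ω ≤ 0}).toReal))
      atTop (nhds (⨆ l : ℝ, -(κf P (Z 0) l))) ∧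
    ∀ n : ℕ, P {ω | ∑ k ∈ Finset.range n, Z k ω ≤ 0} ≤
      ENNReal.ofReal (Real.exp (-(n : ℝ) * ⨆ l : ℝ, -(κf P (Z 0) l))) := by
  have hX0m : Measurable (Z 0) := hmeas 0
  set qE : ℝ≥0∞ := P {ω | Z 0 ω = 0} with hqE
  have hprq : ∀ n, P {ω | ∑ k ∈ Finset.range n, Z k ω ≤ 0} = qE ^ n :=
    prob_eq_pow_of_nonneg hmeas hindep hident h0
  have hae0 : ∀ᵐ ω ∂P, 0 ≤ Z 0 ω := by
    rw [ae_iff]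
    have : {ω | ¬0 ≤ Z 0 ω} = {ω | Z 0 ω < 0} := by ext ω; simp [not_le]
    rw [this, h0]
  have htendM := tendsto_Mf_atBot hX0m hae0
  rw [← hqE] at htendM
  set I : ℝ := ⨆ l : ℝ, -(κf P (Z 0) l) with hI
  by_cases hqz : qE = 0
  · -- q = 0 : Z > 0 a.s., pr n = 0
    have hIzero : I = 0 := by
      refine Real.iSup_of_not_bddAbove ?_
      rintro ⟨b, hb⟩
      have hq0 : qE.toReal = 0 := by rw [hqz]; rfl
      rw [hq0] at htendM
      have hMpos : ∀ n : ℕ, 0 < Mf P (Z 0) (-(n:ℝ)) := fun n => Mf_pos hX0m hX _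
      have htendM' : Tendsto (fun n : ℕ => Mf P (Z 0) (-(n:ℝ))) atTop (nhdsWithin 0 (Set.Ioi 0)) := by
        refine tendsto_nhdsWithin_of_tendsto_nhds_of_eventually_within _ htendM ?_
        exact Filter.Eventually.of_forall fun n => hMpos n
      have hlog : Tendsto (fun n : ℕ => κf P (Z 0) (-(n:ℝ))) atTop atBot :=
        Real.tendsto_log_nhdsGT_zero.comp htendM'
      have hneg : Tendsto (fun n : ℕ => -(κf P (Z 0) (-(n:ℝ)))) atTop atTop :=
        tendsto_neg_atBot_atTop.comp hlog
      obtain ⟨n, hn⟩ := (hneg.eventually_gt_atTop b).exists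
      exact absurd (hb (Set.mem_range_self (-(n:ℝ)))) (not_le.2 hn)
    constructor
    · rw [hIzero]
      refine Tendsto.congr' ?_ tendsto_const_nhds
      filter_upwards [Filter.eventually_ge_atTop 1] with n hn
      rw [hprq n, hqz, zero_pow (by omega), ENNReal.toReal_zero, Real.log_zero,
        mul_zero]
    · intro n
      rw [hIzero]
      simp only [mul_zero, Real.exp_zero, ENNReal.ofReal_one]
      exact prob_le_one
  · -- q > 0
    set qr : ℝ := qE.toReal with hqr
    have hqrpos : 0 < qr := ENNReal.toReal_pos hqz (measure_ne_top P _)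
    have hqrle1 : qr ≤ 1 := by
      rw [hqr]
      exact ENNReal.toReal_le_of_le_ofReal one_pos.le (by simpa using prob_le_one)
    have hκge : ∀ l, Real.log qr ≤ κf P (Z 0) l := fun l =>
      Real.log_le_log hqrpos (prob_eq_zero_le_Mf hX0m hX l)
    have hbdd : BddAbove (Set.range fun l => -(κf P (Z 0) l)) := by
      refine ⟨-(Real.log qr), ?_⟩
      rintro x ⟨l, rfl⟩
      exact neg_le_neg (hκge l)
    have hκtend : Tendsto (fun n : ℕ => -(κf P (Z 0) (-(n:ℝ)))) atTop
        (nhds (-(Real.log qr))) := by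
      have hlogcont : Tendsto (fun n : ℕ => Real.log (Mf P (Z 0) (-(n:ℝ)))) atTop
          (nhds (Real.log qr)) :=
        ((Real.continuousAt_log hqrpos.ne').tendsto).comp htendM
      exact hlogcont.neg
    have hIeq : I = -(Real.log qr) := by
      refine le_antisymm (ciSup_le fun l => neg_le_neg (hκge l)) ?_
      exact le_of_tendsto hκtend (Filter.Eventually.of_forall fun n =>
        le_ciSup hbdd (-(n:ℝ)))
    have hprtoReal : ∀ n : ℕ, (P {ω | ∑ k ∈ Finset.range n, Z k ω ≤ 0}).toReal
        = qr ^ n := by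
      intro n
      rw [hprq n, ENNReal.toReal_pow]
    constructor
    · rw [hIeq]
      refine Tendsto.congr' ?_ tendsto_const_nhds
      filter_upwards [Filter.eventually_ge_atTop 1] with n hn
      rw [hprtoReal n, Real.log_pow]
      have hn0 : (n:ℝ) ≠ 0 := by positivity
      field_simp
    · intro n
      rw [hIeq, hprq n]
      have : Real.exp (-(n:ℝ) * -Real.log qr) = qr ^ n := by
        rw [neg_mul_neg, Real.exp_nat_mul, Real.exp_log hqrpos]
      rw [this]
      have hcalc : qE ^ n = ENNReal.ofReal (qr ^ n) := by
        calc qE ^ n = (ENNReal.ofReal qr) ^ n := by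
              rw [hqr, ENNReal.ofReal_toReal (measure_ne_top P _)]
          _ = ENNReal.ofReal (qr ^ n) := (ENNReal.ofReal_pow hqrpos.le n).symm
      rw [hcalc]

set_option maxHeartbeats 1000000 in
include hmeas hindep hident in
lemma main_neg (hX : ∀ l : ℝ, Integrable (fun ω => exp (l * Z 0 ω)) P)
    (hmean : 0 < ∫ ω, Z 0 ω ∂P) (hq : P {ω | Z 0 ω < 0} ≠ 0) :
    Tendsto (fun n : ℕ => -(1 / (n : ℝ)) *
        Real.log ((P {ω | ∑ k ∈ Finset.range n, Z k ω ≤ 0}).toReal))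
      atTop (nhds (⨆ l : ℝ, -(κf P (Z 0) l))) ∧
    ∀ n : ℕ, P {ω | ∑ k ∈ Finset.range n, Z k ω ≤ 0} ≤
      ENNReal.ofReal (Real.exp (-(n : ℝ) * ⨆ l : ℝ, -(κf P (Z 0) l))) := by
  have hX0m : Measurable (Z 0) := hmeas 0
  set prf : ℕ → ℝ := fun n => (P {ω | ∑ k ∈ Finset.range n, Z k ω ≤ 0}).toReal with hprf
  have hq0 : P {ω | Z 0 ω ≤ 0} ≠ 0 := fun h =>
    hq (measure_mono_null (fun ω (hω : Z 0 ω < 0) => le_of_lt hω) h)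
  set q0 : ℝ := (P {ω | Z 0 ω ≤ 0}).toReal with hq0def
  have hq0pos : 0 < q0 := ENNReal.toReal_pos hq0 (measure_ne_top P _)
  have hq0le1 : q0 ≤ 1 :=
    ENNReal.toReal_le_of_le_ofReal one_pos.le (by simpa using prob_le_one)
  have hpr : ∀ n : ℕ, q0 ^ n ≤ prf n := by
    intro n
    have h1 := prob_pow_le hmeas hindep hident n
    have h2 := ENNReal.toReal_mono (measure_ne_top P _) h1
    rwa [ENNReal.toReal_pow] at h2
  have hprpos : ∀ n, 0 < prf n := fun n => lt_of_lt_of_le (pow_pos hq0pos n) (hpr n)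
  have hprle1 : ∀ n, prf n ≤ 1 := fun n =>
    ENNReal.toReal_le_of_le_ofReal one_pos.le (by simpa using prob_le_one)
  have hM0 : Mf P (Z 0) 0 = 1 := by simp [Mf]
  have hκ0 : κf P (Z 0) 0 = 0 := by rw [κf, hM0, Real.log_one]
  have hjen : ∀ l, l * ∫ ω, Z 0 ω ∂P ≤ κf P (Z 0) l := jensen_κf hX0m hX
  have hbdd : BddAbove (Set.range fun l => -(κf P (Z 0) l)) := by
    refine ⟨-(Real.log q0), ?_⟩
    rintro x ⟨l, rfl⟩
    rcases le_or_gt l 0 with hl | hl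
    · exact neg_le_neg (Real.log_le_log hq0pos (prob_le_zero_le_Mf hX0m hX hl))
    · have h1 : 0 ≤ κf P (Z 0) l :=
        le_trans (mul_nonneg hl.le hmean.le) (hjen l)
      have h2 : Real.log q0 ≤ 0 := Real.log_nonpos hq0pos.le hq0le1
      simp only
      linarith
  set I : ℝ := ⨆ l : ℝ, -(κf P (Z 0) l) with hI
  have hIle : ∀ l, -(κf P (Z 0) l) ≤ I := fun l => le_ciSup hbdd l
  have hkey : ∀ n : ℕ, 1 ≤ n → I ≤ -(1 / (n:ℝ)) * Real.log (prf n) := by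
    intro n hn
    have hnpos : (0:ℝ) < (n:ℝ) := by exact_mod_cast hn
    refine ciSup_le fun l => ?_
    rcases le_or_gt l 0 with hl | hl
    · have hch := chernoff_n hmeas hindep hident hX hl n
      have hlog : Real.log (prf n) ≤ (n:ℝ) * κf P (Z 0) l := by
        have h1 := Real.log_le_log (hprpos n) hch
        rw [Real.log_pow] at h1
        exact h1
      have h2 := mul_le_mul_of_nonneg_left hlog (le_of_lt (one_div_pos.2 hnpos))
      have heq : (1/(n:ℝ)) * ((n:ℝ) * κf P (Z 0) l) = κf P (Z 0) l := by
        field_simp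
      rw [heq] at h2
      linarith
    · have h1 : 0 < κf P (Z 0) l := lt_of_lt_of_le (mul_pos hl hmean) (hjen l)
      have h2 : Real.log (prf n) ≤ 0 := Real.log_nonpos (hprpos n).le (hprle1 n)
      have h3 : (1/(n:ℝ)) * Real.log (prf n) ≤ 0 :=
        mul_nonpos_iff.2 (Or.inl ⟨(one_div_pos.2 hnpos).le, h2⟩)
      linarith
  constructor
  · -- the limit
    rw [tendsto_order]
    constructor
    · intro b hb
      filter_upwards [Filter.eventually_ge_atTop 1] with n hn
      exact lt_of_lt_of_le hb (hkey n hn)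
    · intro b hb
      set δ : ℝ := b - I with hδdef
      have hδ : 0 < δ := by simp only [hδdef]; linarith
      obtain ⟨l₀, hl₀neg, hA₀⟩ := exists_Af_neg hX0m hX hq
      have hm₀ : mf P (Z 0) l₀ < 0 := div_neg_of_neg_of_pos hA₀ (Mf_pos hX0m hX l₀)
      have hmono := mf_monotone hX0m hX
      have hmcont := mf_continuous hX0m hX
      have hκcont := κf_continuous hX0m hX
      have hm0pos : 0 < mf P (Z 0) 0 := by
        have hAf0 : Af P (Z 0) 0 = ∫ ω, Z 0 ω ∂P := by simp [Af]
        rw [mf, hAf0, hM0]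
        simpa using hmean
      set Sset : Set ℝ := {l : ℝ | mf P (Z 0) l < 0} with hSset
      have hSne : Sset.Nonempty := ⟨l₀, hm₀⟩
      have hSbd : ∀ l ∈ Sset, l ≤ 0 := by
        intro l hl
        by_contra hc
        push_neg at hc
        have := hmono hc.le
        have hl' : mf P (Z 0) l < 0 := hl
        linarith
      have hSbdd : BddAbove Sset := ⟨0, fun l hl => hSbd l hl⟩
      set l₁ : ℝ := sSup Sset with hl₁def
      have hl₁le0 : l₁ ≤ 0 := csSup_le hSne hSbd
      have hmneg : ∀ l < l₁, mf P (Z 0) l < 0 := by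
        intro l hl
        obtain ⟨t, htS, hlt⟩ := exists_lt_of_lt_csSup hSne hl
        exact lt_of_le_of_lt (hmono hlt.le) htS
      have hm₁ : mf P (Z 0) l₁ = 0 := by
        rcases lt_trichotomy (mf P (Z 0) l₁) 0 with h | h | h
        · have hev : ∀ᶠ x in nhds l₁, mf P (Z 0) x < 0 :=
            (hmcont.continuousAt (x := l₁)).eventually_lt_const h
          obtain ⟨ε, hε, hball⟩ := Metric.eventually_nhds_iff.1 hev
          have hmem : l₁ + ε/2 ∈ Sset := by
            apply hball
            rw [Real.dist_eq]
            rw [abs_of_nonneg (by linarith)]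
            linarith
          have := le_csSup hSbdd hmem
          linarith
        · exact h
        · have hev : ∀ᶠ x in nhds l₁, 0 < mf P (Z 0) x :=
            (hmcont.continuousAt (x := l₁)).eventually_const_lt h
          obtain ⟨ε, hε, hball⟩ := Metric.eventually_nhds_iff.1 hev
          have hlt : l₁ - ε/2 < l₁ := by linarith
          have h1 := hmneg _ hlt
          have h2 : 0 < mf P (Z 0) (l₁ - ε/2) := by
            apply hball
            rw [Real.dist_eq, abs_of_nonpos (by linarith)]
            linarith
          linarith
      have hl₁neg : l₁ < 0 := by
        rcases lt_or_eq_of_le hl₁le0 with h | h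
        · exact h
        · rw [h] at hm₁
          linarith
      have hκmin := κf_isMin hX0m hX hm₁
      have hIeq : I = -(κf P (Z 0) l₁) :=
        le_antisymm (ciSup_le fun l => neg_le_neg (hκmin l)) (hIle l₁)
      -- choose l < l₁ with good g value
      have hgcont : ContinuousAt (fun x => -(κf P (Z 0) x) + x * mf P (Z 0) x) l₁ :=
        ((hκcont.neg).add (continuous_id.mul hmcont)).continuousAt
      have hgval : -(κf P (Z 0) l₁) + l₁ * mf P (Z 0) l₁ = I := by
        rw [hm₁, hIeq]; ring
      have hev : ∀ᶠ x in nhdsWithin l₁ (Set.Iio l₁),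
          -(κf P (Z 0) x) + x * mf P (Z 0) x < I + δ/4 := by
        have htd : Tendsto (fun x => -(κf P (Z 0) x) + x * mf P (Z 0) x)
            (nhdsWithin l₁ (Set.Iio l₁)) (nhds I) := by
          rw [← hgval]
          exact hgcont.tendsto.mono_left nhdsWithin_le_nhds
        exact htd.eventually_lt_const (by linarith)
      obtain ⟨l, hgl, hlmem⟩ := (hev.and self_mem_nhdsWithin).exists
      have hl_lt : l < l₁ := hlmem
      have hml : mf P (Z 0) l < 0 := hmneg l hl_lt
      have hlneg : l < 0 := lt_trans hl_lt hl₁neg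
      set mv : ℝ := mf P (Z 0) l with hmv
      set ε : ℝ := min (-(mv)/2) (δ/(8 * (1 + -l))) with hεdef
      have h1l : (0:ℝ) < 1 + -l := by linarith
      have hεpos : 0 < ε := lt_min (by linarith) (by positivity)
      have hmε : mv + ε ≤ 0 := by
        have := min_le_left (-(mv)/2) (δ/(8 * (1 + -l)))
        have hε1 : ε ≤ -(mv)/2 := this
        linarith
      have hlε : -l * ε ≤ δ/4 := by
        have hε2 : ε ≤ δ/(8 * (1 + -l)) := min_le_right _ _
        have h2 : -l * ε ≤ -l * (δ/(8 * (1 + -l))) :=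
          mul_le_mul_of_nonneg_left hε2 (by linarith)
        have h3 : -l * (δ/(8 * (1 + -l))) ≤ δ/8 := by
          have he : -l * (δ / (8 * (1 + -l))) = (-l * δ) / (8 * (1 + -l)) := by ring
          rw [he, div_le_div_iff₀ (by positivity) (by norm_num : (0:ℝ) < 8)]
          nlinarith
        linarith
      set Cl : ℝ := ∫ ω, (Z 0 ω - mv) ^ 2 * exp (l * Z 0 ω) ∂P with hClv
      set Mv : ℝ := Mf P (Z 0) l with hMv
      have hMpos : 0 < Mv := Mf_pos hX0m hX l
      have hClnn : 0 ≤ Cl := Cf_nonneg hX0m hX mv l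
      -- thresholds
      obtain ⟨Nr, hNr⟩ := exists_nat_gt (max ((2*Cl)/(Mv*ε^2)) (Real.log 2/(δ/4)))
      filter_upwards [Filter.eventually_ge_atTop (max Nr 1)] with n hn
      have hn1 : 1 ≤ n := le_trans (le_max_right _ _) hn
      have hnNr : Nr ≤ n := le_trans (le_max_left _ _) hn
      have hnR : (1:ℝ) ≤ (n:ℝ) := by exact_mod_cast hn1
      have hnpos : (0:ℝ) < (n:ℝ) := by linarith
      have hnc : max ((2*Cl)/(Mv*ε^2)) (Real.log 2/(δ/4)) < (n:ℝ) :=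
        lt_of_lt_of_le hNr (by exact_mod_cast hnNr)
      have hchixok : Cl / (Mv * n * ε^2) ≤ 1/2 := by
        have h7 : (2*Cl)/(Mv*ε^2) < (n:ℝ) := lt_of_le_of_lt (le_max_left _ _) hnc
        rw [div_le_iff₀ (by positivity)]
        rw [div_lt_iff₀ (by positivity)] at h7
        nlinarith
      have hlog2 : Real.log 2 / (n:ℝ) < δ/4 := by
        have h7 : Real.log 2/(δ/4) < (n:ℝ) := lt_of_le_of_lt (le_max_right _ _) hnc
        rw [div_lt_iff₀ hnpos]
        rw [div_lt_iff₀ (by linarith)] at h7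
        linarith
      -- lower bound
      have hLB := lower_bound hmeas hindep hident hX hlneg hεpos hmε hn1
      rw [← hmv, ← hMv, ← hClv] at hLB
      have hhalf : (1:ℝ)/2 ≤ 1 - Cl/(Mv * n * ε^2) := by linarith
      have hprge : exp ((n:ℝ) * (κf P (Z 0) l - l * (mv - ε))) * (1/2) ≤ prf n :=
        le_trans (mul_le_mul_of_nonneg_left hhalf (Real.exp_pos _).le) hLB
      have hlogpr : (n:ℝ) * (κf P (Z 0) l - l * (mv - ε)) + Real.log (1/2)
          ≤ Real.log (prf n) := by
        have h8 : Real.log (exp ((n:ℝ) * (κf P (Z 0) l - l * (mv - ε))) * (1/2))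
            = (n:ℝ) * (κf P (Z 0) l - l * (mv - ε)) + Real.log (1/2) := by
          rw [Real.log_mul (Real.exp_ne_zero _) (by norm_num), Real.log_exp]
        rw [← h8]
        exact Real.log_le_log (by positivity) hprge
      have hl2 : Real.log (1/2) = -Real.log 2 := by
        rw [one_div, Real.log_inv]
      have hfin : -(1/(n:ℝ)) * Real.log (prf n)
          ≤ -(κf P (Z 0) l - l * (mv - ε)) + Real.log 2 / n := by
        have h9 := mul_le_mul_of_nonneg_left hlogpr (one_div_pos.2 hnpos).le
        have heq2 : (1/(n:ℝ)) * ((n:ℝ) * (κf P (Z 0) l - l * (mv - ε)) + Real.log (1/2))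
            = (κf P (Z 0) l - l * (mv - ε)) - Real.log 2 / n := by
          rw [hl2]
          field_simp
          ring
        rw [heq2] at h9
        linarith
      have hsplit : -(κf P (Z 0) l - l * (mv - ε))
          = (-(κf P (Z 0) l) + l * mv) + (-l) * ε := by ring
      have hgl' : -(κf P (Z 0) l) + l * mv < I + δ/4 := hgl
      calc -(1/(n:ℝ)) * Real.log (prf n)
          ≤ -(κf P (Z 0) l - l * (mv - ε)) + Real.log 2 / n := hfin
        _ = (-(κf P (Z 0) l) + l * mv) + (-l) * ε + Real.log 2 / n := by rw [hsplit]
        _ < (I + δ/4) + δ/4 + δ/4 := by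
            have := hlog2
            have := hlε
            linarith
        _ ≤ b := by
            simp only [hδdef]
            linarith
  · -- Chernoff bound
    intro n
    rcases Nat.eq_zero_or_pos n with h0 | hpos
    · subst h0
      simp only [Nat.cast_zero, neg_zero, zero_mul, Real.exp_zero, ENNReal.ofReal_one]
      exact prob_le_one
    · have hk := hkey n hpos
      have hnpos : (0:ℝ) < (n:ℝ) := by exact_mod_cast hpos
      have hlog : Real.log (prf n) ≤ -((n:ℝ) * I) := by
        have h2 := mul_le_mul_of_nonneg_left hk hnpos.le
        have heq : (n:ℝ) * (-(1/(n:ℝ)) * Real.log (prf n)) = -Real.log (prf n) := by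
          field_simp
        rw [heq] at h2
        linarith
      have hple : prf n ≤ Real.exp (-(n:ℝ) * I) := by
        have := (Real.log_le_iff_le_exp (hprpos n)).1 hlog
        rwa [neg_mul] at *
      calc P {ω | ∑ k ∈ Finset.range n, Z k ω ≤ 0}
          = ENNReal.ofReal (prf n) :=
            (ENNReal.ofReal_toReal (measure_ne_top P _)).symm
        _ ≤ ENNReal.ofReal (Real.exp (-(n:ℝ) * I)) := ENNReal.ofReal_le_ofReal hple

end Indep
end CramerAux


open MeasureTheory Filter

/-- Cramér's theorem at threshold 0 for i.i.d. mean-positive variables with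
everywhere-finite mgf: the lower tail `P(Σ Zₖ ≤ 0)` has exponential rate
`sup_λ (−κ(λ))`, and the Chernoff bound
`P(Σ Zₖ ≤ 0) ≤ exp(−n·sup_λ(−κ(λ)))` holds for all `n`. -/
theorem cramer_chernoff_zero {Ω : Type*} [MeasurableSpace Ω] (P : Measure Ω) [IsProbabilityMeasure P]
    (Z : ℕ → Ω → ℝ) (hmeas : ∀ i, Measurable (Z i))
    (hindep : ProbabilityTheory.iIndepFun Z P)
    (hident : ∀ i, ProbabilityTheory.IdentDistrib (Z i) (Z 0) P P)
    (hmgf : ∀ l : ℝ, Integrable (fun ω => Real.exp (l * Z 0 ω)) P)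
    (hmean : 0 < ∫ ω, Z 0 ω ∂P) :
    Tendsto (fun n : ℕ => -(1 / (n : ℝ)) *
        Real.log ((P {ω | ∑ k ∈ Finset.range n, Z k ω ≤ 0}).toReal))
      atTop
      (nhds (⨆ l : ℝ, -(Real.log (∫ ω, Real.exp (l * Z 0 ω) ∂P)))) ∧
    ∀ n : ℕ, P {ω | ∑ k ∈ Finset.range n, Z k ω ≤ 0} ≤
      ENNReal.ofReal (Real.exp (-(n : ℝ) *
        ⨆ l : ℝ, -(Real.log (∫ ω, Real.exp (l * Z 0 ω) ∂P)))) := by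
  classical
  rcases eq_or_ne (P {ω | Z 0 ω < 0}) 0 with h0 | h0
  · exact CramerAux.main_nonneg hmeas hindep hident hmgf h0
  · exact CramerAux.main_neg hmeas hindep hident hmgf hmean h0
end
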